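/- arXiv:1009.0689 — 10 statements merged into one kernel-verified Lean document; each statement's English description precedes it below -/
import Mathlib

section
/- Along any C^1 solution (φ, y, ρ, ρ_r, H) : I → ℝ^5 of the coupled scalar field–matter–radiation system, the quantity G(t) := 3H(t)^2 − (1/2)y(t)^2 − V(φ(t)) − ρ(t) − ρ_r(t) has derivative identically zero, hence is constant on I; in particular if the Friedmann constraint 3H^2 = (1/2)y^2 + V(φ) + ρ + ρ_r holds at one time t_0 ∈ I, it holds for all t ∈ I. -/
open Set

/-- Along any C¹ solution of the coupled scalar field–matter–radiation system,
the quantity `G(t) = 3H² − y²/2 − V(φ) − ρ − ρ_r` has derivative identically zero,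
hence is constant on the interval; in particular, if the Friedmann constraint holds
at one time, it holds for all times. -/
theorem stmt_0
    (V V' χ χ' : ℝ → ℝ)
    (hV : ∀ x, HasDerivAt V (V' x) x)
    (hχ : ∀ x, HasDerivAt χ (χ' x) x)
    (hχpos : ∀ x, 0 < χ x)
    (γ a b : ℝ)
    (φ y ρ ρr H : ℝ → ℝ)
    (hφ : ∀ t ∈ Ioo a b, HasDerivAt φ (y t) t)
    (hy : ∀ t ∈ Ioo a b, HasDerivAt y
      (-3 * H t * y t - V' (φ t) + (1/2) * (4 - 3*γ) * ρ t * (χ' (φ t) / χ (φ t))) t)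
    (hρ : ∀ t ∈ Ioo a b, HasDerivAt ρ
      (-3 * γ * H t * ρ t - (1/2) * (4 - 3*γ) * ρ t * y t * (χ' (φ t) / χ (φ t))) t)
    (hρr : ∀ t ∈ Ioo a b, HasDerivAt ρr (-4 * H t * ρr t) t)
    (hH : ∀ t ∈ Ioo a b, HasDerivAt H
      (-(1/2) * (γ * ρ t + (4/3) * ρr t + (y t)^2)) t) :
    (∀ t ∈ Ioo a b, HasDerivAt
        (fun s => 3 * (H s)^2 - (1/2) * (y s)^2 - V (φ s) - ρ s - ρr s) 0 t)
    ∧ (∀ t ∈ Ioo a b, ∀ s ∈ Ioo a b,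
        3 * (H t)^2 - (1/2) * (y t)^2 - V (φ t) - ρ t - ρr t
          = 3 * (H s)^2 - (1/2) * (y s)^2 - V (φ s) - ρ s - ρr s)
    ∧ (∀ t0 ∈ Ioo a b,
        3 * (H t0)^2 = (1/2) * (y t0)^2 + V (φ t0) + ρ t0 + ρr t0 →
        ∀ t ∈ Ioo a b,
          3 * (H t)^2 = (1/2) * (y t)^2 + V (φ t) + ρ t + ρr t) := by

  set G : ℝ → ℝ := fun s => 3 * (H s)^2 - (1/2) * (y s)^2 - V (φ s) - ρ s - ρr s with hGdef
  have hG : ∀ t ∈ Ioo a b, HasDerivAt G 0 t := by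
    intro t ht
    have h1 := ((hH t ht).pow 2).const_mul (3:ℝ)
    have h2 := ((hy t ht).pow 2).const_mul ((1:ℝ)/2)
    have h3 := (hV (φ t)).comp t (hφ t ht)
    have h := (((h1.sub h2).sub h3).sub (hρ t ht)).sub (hρr t ht)
    refine h.congr_deriv ?_
    ring
  have key : ∀ t ∈ Ioo a b, ∀ s ∈ Ioo a b, t ≤ s → G s = G t := by
    intro t ht s hs hts
    have hsub : Icc t s ⊆ Ioo a b := fun x hx => ⟨lt_of_lt_of_le ht.1 hx.1, lt_of_le_of_lt hx.2 hs.2⟩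
    exact constant_of_has_deriv_right_zero
      (fun x hx => ((hG x (hsub hx)).continuousAt).continuousWithinAt)
      (fun x hx => ((hG x (hsub ⟨hx.1, le_of_lt hx.2⟩)).hasDerivWithinAt)) s (right_mem_Icc.2 hts)
  have const : ∀ t ∈ Ioo a b, ∀ s ∈ Ioo a b, G t = G s := by
    intro t ht s hs
    rcases le_total t s with h | h
    · exact (key t ht s hs h).symm
    · exact key s hs t ht h
  refine ⟨hG, const, ?_⟩
  intro t0 ht0 hfr t ht
  have := const t ht t0 ht0
  simp only [hGdef] at this
  nlinarith [this]
end

section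
/- (Proposition 3.4) The set Σ_0 := {(σ_1, σ_2, σ_3, σ_4) ∈ ℝ^4 : σ_2^2 + σ_3^2 + σ_4^2 = 1, σ_3 ≥ 0, σ_4 ≥ 0}, equipped with the subspace topology from ℝ^4, is a topological manifold with boundary: for every point p ∈ Σ_0 there exist a positive integer m (depending on p), an open neighborhood U of p in Σ_0, and a homeomorphism from U onto an open subset of the half-space ℍ^m = {x ∈ ℝ^m : x_m ≥ 0}. -/
open Set

/-- The set `Σ₀ = {(σ₁,σ₂,σ₃,σ₄) : σ₂² + σ₃² + σ₄² = 1, σ₃ ≥ 0, σ₄ ≥ 0}` with the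
subspace topology of ℝ⁴. -/
def Sigma0 : Set (ℝ × ℝ × ℝ × ℝ) :=
  {σ | σ.2.1^2 + σ.2.2.1^2 + σ.2.2.2^2 = 1 ∧ 0 ≤ σ.2.2.1 ∧ 0 ≤ σ.2.2.2}

noncomputable abbrev sEx : EuclideanSpace ℝ (Fin 3) ≃L[ℝ] (Fin 3 → ℝ) :=
  EuclideanSpace.equiv (Fin 3) ℝ

/-- A generic chart-building lemma: a continuous map with continuous inverse between
an open piece of `Sigma0` and an open piece of the half-space yields the desired data. -/
lemma chart3 (f : (ℝ × ℝ × ℝ × ℝ) → Fin 3 → ℝ) (g : (Fin 3 → ℝ) → (ℝ × ℝ × ℝ × ℝ))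
    (hf : Continuous f) (hg : Continuous g)
    (V : Set (ℝ × ℝ × ℝ × ℝ)) (hV : IsOpen V) (W' : Set (Fin 3 → ℝ)) (hW' : IsOpen W')
    (h1 : ∀ p ∈ Sigma0 ∩ V, f p ∈ W' ∧ 0 ≤ f p ⟨2, by norm_num⟩ ∧ g (f p) = p)
    (h2 : ∀ x ∈ W', 0 ≤ x ⟨2, by norm_num⟩ → g x ∈ Sigma0 ∩ V ∧ f (g x) = x)
    (p : Sigma0) (hp : p.1 ∈ V) :
    ∃ (U : Set Sigma0), IsOpen U ∧ p ∈ U ∧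
      ∃ W : Set {x : EuclideanSpace ℝ (Fin 3) // 0 ≤ x ⟨2, by norm_num⟩},
        IsOpen W ∧ Nonempty (U ≃ₜ W) := by
  refine ⟨Subtype.val ⁻¹' V, hV.preimage continuous_subtype_val, hp,
    {x | sEx x.1 ∈ W'}, hW'.preimage (sEx.continuous.comp continuous_subtype_val), ⟨?_⟩⟩
  refine
    { toFun := fun σ => ⟨⟨sEx.symm (f σ.1.1),
        (h1 σ.1.1 ⟨σ.1.2, σ.2⟩).2.1⟩, by
          show sEx (sEx.symm _) ∈ W'
          rw [sEx.apply_symm_apply]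
          exact (h1 σ.1.1 ⟨σ.1.2, σ.2⟩).1⟩
      invFun := fun x => ⟨⟨g (sEx x.1.1), (h2 (sEx x.1.1) x.2 x.1.2).1.1⟩,
        (h2 (sEx x.1.1) x.2 x.1.2).1.2⟩
      left_inv := fun σ => by
        apply Subtype.ext; apply Subtype.ext
        show g (sEx (sEx.symm (f σ.1.1))) = σ.1.1
        rw [sEx.apply_symm_apply]
        exact (h1 σ.1.1 ⟨σ.1.2, σ.2⟩).2.2
      right_inv := fun x => by
        apply Subtype.ext; apply Subtype.ext
        show sEx.symm (f (g (sEx x.1.1))) = x.1.1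
        rw [(h2 (sEx x.1.1) x.2 x.1.2).2]
        exact sEx.symm_apply_apply x.1.1
      continuous_toFun := by
        apply Continuous.subtype_mk
        apply Continuous.subtype_mk
        exact sEx.symm.continuous.comp
          (hf.comp (continuous_subtype_val.comp continuous_subtype_val))
      continuous_invFun := by
        apply Continuous.subtype_mk
        apply Continuous.subtype_mk
        exact hg.comp (sEx.continuous.comp
          (continuous_subtype_val.comp continuous_subtype_val)) }

/-- Chart near points with `σ₄ > 0`. -/
def fD : (ℝ×ℝ×ℝ×ℝ) → (Fin 3 → ℝ) := fun p => ![p.1, p.2.1, p.2.2.1]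
noncomputable def gD : (Fin 3 → ℝ) → (ℝ×ℝ×ℝ×ℝ) := fun x =>
  (x 0, x 1, x 2, Real.sqrt (1 - (x 1)^2 - (x 2)^2))

/-- Chart near points with `σ₃ > 0`. -/
def fC : (ℝ×ℝ×ℝ×ℝ) → (Fin 3 → ℝ) := fun p => ![p.1, p.2.1, p.2.2.2]
noncomputable def gC : (Fin 3 → ℝ) → (ℝ×ℝ×ℝ×ℝ) := fun x =>
  (x 0, x 1, Real.sqrt (1 - (x 1)^2 - (x 2)^2), x 2)

/-- Corner chart near points with `s·σ₂ > 0` (s = ±1), straightening the corner by squaring. -/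
def fB : (ℝ×ℝ×ℝ×ℝ) → (Fin 3 → ℝ) := fun p => ![p.1, p.2.2.1^2 - p.2.2.2^2, 2*p.2.2.1*p.2.2.2]
noncomputable def gB (s : ℝ) : (Fin 3 → ℝ) → (ℝ×ℝ×ℝ×ℝ) := fun x =>
  (x 0, s * Real.sqrt (1 - Real.sqrt ((x 1)^2 + (x 2)^2)),
   Real.sqrt ((Real.sqrt ((x 1)^2 + (x 2)^2) + x 1)/2),
   Real.sqrt ((Real.sqrt ((x 1)^2 + (x 2)^2) - x 1)/2))

def Wdisc : Set (Fin 3 → ℝ) := {x | (x 1)^2 + (x 2)^2 < 1}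

lemma isOpen_Wdisc : IsOpen Wdisc := by
  have : Continuous fun x : Fin 3 → ℝ => (x 1)^2 + (x 2)^2 := by fun_prop
  exact isOpen_lt this continuous_const

lemma continuous_fD : Continuous fD := by
  apply continuous_pi; intro i; fin_cases i <;> simp [fD] <;> fun_prop

lemma continuous_gD : Continuous gD := by unfold gD; fun_prop

lemma continuous_fC : Continuous fC := by
  apply continuous_pi; intro i; fin_cases i <;> simp [fC] <;> fun_prop

lemma continuous_gC : Continuous gC := by unfold gC; fun_prop

lemma continuous_fB : Continuous fB := by
  apply continuous_pi; intro i; fin_cases i <;> simp [fB] <;> fun_prop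

lemma continuous_gB (s : ℝ) : Continuous (gB s) := by unfold gB; fun_prop

lemma chartD_h1 : ∀ p ∈ Sigma0 ∩ {p : ℝ×ℝ×ℝ×ℝ | 0 < p.2.2.2},
    fD p ∈ Wdisc ∧ 0 ≤ fD p ⟨2, by norm_num⟩ ∧ gD (fD p) = p := by
  rintro ⟨a,b,c,d⟩ ⟨⟨h1, h2, h3⟩, h4⟩
  simp only [Sigma0, Wdisc, fD, gD, mem_setOf_eq] at *
  refine ⟨by simp; nlinarith, by simp [show (⟨2, by norm_num⟩ : Fin 3) = 2 from rfl]; exact h2, ?_⟩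
  simp only [Matrix.cons_val_zero, Matrix.cons_val_one, Matrix.head_cons,
    Matrix.cons_val_two, Matrix.tail_cons]
  have : (1 : ℝ) - b^2 - c^2 = d^2 := by nlinarith
  rw [this, Real.sqrt_sq h3]

lemma chartD_h2 : ∀ x ∈ Wdisc, 0 ≤ x ⟨2, by norm_num⟩ →
    gD x ∈ Sigma0 ∩ {p : ℝ×ℝ×ℝ×ℝ | 0 < p.2.2.2} ∧ fD (gD x) = x := by
  intro x hx h2
  have h2' : 0 ≤ x 2 := h2
  simp only [Wdisc, mem_setOf_eq] at hx
  have hpos : (0:ℝ) < 1 - (x 1)^2 - (x 2)^2 := by nlinarith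
  constructor
  · refine ⟨⟨?_, h2', Real.sqrt_nonneg _⟩, Real.sqrt_pos.mpr hpos⟩
    show (x 1)^2 + (x 2)^2 + (Real.sqrt (1 - (x 1)^2 - (x 2)^2))^2 = 1
    rw [Real.sq_sqrt hpos.le]; ring
  · funext i
    fin_cases i <;> simp [fD, gD]

lemma chartC_h1 : ∀ p ∈ Sigma0 ∩ {p : ℝ×ℝ×ℝ×ℝ | 0 < p.2.2.1},
    fC p ∈ Wdisc ∧ 0 ≤ fC p ⟨2, by norm_num⟩ ∧ gC (fC p) = p := by
  rintro ⟨a,b,c,d⟩ ⟨⟨h1, h2, h3⟩, h4⟩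
  simp only [Sigma0, Wdisc, fC, gC, mem_setOf_eq] at *
  refine ⟨by simp; nlinarith, by simp [show (⟨2, by norm_num⟩ : Fin 3) = 2 from rfl]; exact h3, ?_⟩
  simp only [Matrix.cons_val_zero, Matrix.cons_val_one, Matrix.head_cons,
    Matrix.cons_val_two, Matrix.tail_cons]
  have : (1 : ℝ) - b^2 - d^2 = c^2 := by nlinarith
  rw [this, Real.sqrt_sq h2]

lemma chartC_h2 : ∀ x ∈ Wdisc, 0 ≤ x ⟨2, by norm_num⟩ →
    gC x ∈ Sigma0 ∩ {p : ℝ×ℝ×ℝ×ℝ | 0 < p.2.2.1} ∧ fC (gC x) = x := by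
  intro x hx h2
  have h2' : 0 ≤ x 2 := h2
  simp only [Wdisc, mem_setOf_eq] at hx
  have hpos : (0:ℝ) < 1 - (x 1)^2 - (x 2)^2 := by nlinarith
  constructor
  · refine ⟨⟨?_, Real.sqrt_nonneg _, h2'⟩, Real.sqrt_pos.mpr hpos⟩
    show (x 1)^2 + (Real.sqrt (1 - (x 1)^2 - (x 2)^2))^2 + (x 2)^2 = 1
    rw [Real.sq_sqrt hpos.le]; ring
  · funext i
    fin_cases i <;> simp [fC, gC]

lemma chartB_h1 (s : ℝ) (hs : s = 1 ∨ s = -1) :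
    ∀ p ∈ Sigma0 ∩ {p : ℝ×ℝ×ℝ×ℝ | 0 < s * p.2.1},
    fB p ∈ Wdisc ∧ 0 ≤ fB p ⟨2, by norm_num⟩ ∧ gB s (fB p) = p := by
  rintro ⟨a,b,c,d⟩ ⟨⟨h1, h2, h3⟩, h4⟩
  simp only [Sigma0, mem_setOf_eq] at *
  have hs2 : s^2 = 1 := by rcases hs with h | h <;> simp [h]
  have hb2 : 0 < b^2 := by
    rcases hs with h | h <;> subst h <;> nlinarith
  have key : ∀ i, fB (a,b,c,d) i = ![a, c^2-d^2, 2*c*d] i := fun i => rfl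
  constructor
  · show (fB (a,b,c,d) 1)^2 + (fB (a,b,c,d) 2)^2 < 1
    rw [key 1, key 2]
    simp only [Matrix.cons_val_one, Matrix.head_cons, Matrix.cons_val_two, Matrix.tail_cons,
      Matrix.cons_val_zero]
    nlinarith [sq_nonneg (c^2+d^2), sq_nonneg b]
  constructor
  · show (0:ℝ) ≤ ![a, c^2-d^2, 2*c*d] ⟨2, by norm_num⟩
    simp [show (⟨2, by norm_num⟩ : Fin 3) = 2 from rfl]
    positivity
  · have hr : Real.sqrt ((fB (a,b,c,d) 1)^2 + (fB (a,b,c,d) 2)^2) = c^2 + d^2 := by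
      rw [key 1, key 2]
      simp only [Matrix.cons_val_one, Matrix.head_cons, Matrix.cons_val_two, Matrix.tail_cons,
      Matrix.cons_val_zero]
      rw [show (c^2-d^2)^2 + (2*c*d)^2 = (c^2+d^2)^2 by ring, Real.sqrt_sq (by positivity)]
    unfold gB
    rw [hr]
    have e0 : fB (a,b,c,d) 0 = a := rfl
    have e1 : fB (a,b,c,d) 1 = c^2 - d^2 := rfl
    rw [e0, e1]
    have hbb : s * Real.sqrt (1 - (c^2+d^2)) = b := by
      rw [show 1 - (c^2+d^2) = b^2 by linarith, Real.sqrt_sq_eq_abs]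
      rcases hs with h | h <;> subst h <;>
        [ (rw [abs_of_pos (by linarith [h4] : (0:ℝ) < b)]; ring) ;
          (rw [abs_of_neg (by nlinarith : b < 0)]; ring) ]
    rw [hbb]
    have hcc : Real.sqrt ((c^2+d^2 + (c^2-d^2))/2) = c := by
      rw [show (c^2+d^2+(c^2-d^2))/2 = c^2 by ring, Real.sqrt_sq h2]
    have hdd : Real.sqrt ((c^2+d^2 - (c^2-d^2))/2) = d := by
      rw [show (c^2+d^2-(c^2-d^2))/2 = d^2 by ring, Real.sqrt_sq h3]
    rw [hcc, hdd]

lemma chartB_h2 (s : ℝ) (hs : s = 1 ∨ s = -1) :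
    ∀ x ∈ Wdisc, 0 ≤ x ⟨2, by norm_num⟩ →
    gB s x ∈ Sigma0 ∩ {p : ℝ×ℝ×ℝ×ℝ | 0 < s * p.2.1} ∧ fB (gB s x) = x := by
  intro x hx hv
  have hv' : 0 ≤ x 2 := hv
  simp only [Wdisc, mem_setOf_eq] at hx
  set u := x 1 with hu
  set v := x 2 with hvv
  set r := Real.sqrt (u^2 + v^2) with hrdef
  have hr0 : 0 ≤ r := Real.sqrt_nonneg _
  have hr2 : r^2 = u^2 + v^2 := Real.sq_sqrt (by positivity)
  have hr1 : r < 1 := by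
    rw [hrdef, show (1:ℝ) = Real.sqrt 1 by simp]
    exact Real.sqrt_lt_sqrt (by positivity) (by simpa using hx)
  have habs : |u| ≤ r := by
    rw [hrdef, ← Real.sqrt_sq_eq_abs]
    exact Real.sqrt_le_sqrt (by nlinarith [sq_nonneg v])
  have hru : 0 ≤ (r + u)/2 := by cases abs_le.mp habs; linarith
  have hru' : 0 ≤ (r - u)/2 := by cases abs_le.mp habs; linarith
  have hs2 : s^2 = 1 := by rcases hs with h | h <;> simp [h]
  have hb2 : (s * Real.sqrt (1 - r))^2 = 1 - r := by
    rw [mul_pow, hs2, Real.sq_sqrt (by linarith), one_mul]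
  have hc2 : (Real.sqrt ((r+u)/2))^2 = (r+u)/2 := Real.sq_sqrt hru
  have hd2 : (Real.sqrt ((r-u)/2))^2 = (r-u)/2 := Real.sq_sqrt hru'
  have hcd : 2 * Real.sqrt ((r+u)/2) * Real.sqrt ((r-u)/2) = v := by
    rw [mul_assoc, ← Real.sqrt_mul hru]
    rw [show (r+u)/2 * ((r-u)/2) = (r^2 - u^2)/4 by ring, hr2,
      show (u^2+v^2-u^2)/4 = (v/2)^2 by ring, Real.sqrt_sq (by linarith)]
    ring
  constructor
  · refine ⟨⟨?_, Real.sqrt_nonneg _, Real.sqrt_nonneg _⟩, ?_⟩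
    · show (s * Real.sqrt (1 - r))^2 + (Real.sqrt ((r+u)/2))^2 + (Real.sqrt ((r-u)/2))^2 = 1
      rw [hb2, hc2, hd2]; ring
    · show 0 < s * (s * Real.sqrt (1 - r))
      rw [← mul_assoc, ← sq, hs2, one_mul]
      exact Real.sqrt_pos.mpr (by linarith)
  · funext i
    fin_cases i
    · rfl
    · show (gB s x).2.2.1^2 - (gB s x).2.2.2^2 = u
      show (Real.sqrt ((r+u)/2))^2 - (Real.sqrt ((r-u)/2))^2 = u
      rw [hc2, hd2]; ring
    · show 2 * (gB s x).2.2.1 * (gB s x).2.2.2 = v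
      exact hcd

/-- (Proposition 3.4) `Σ₀` is a topological manifold with boundary: every point has an
open neighborhood homeomorphic to an open subset of some half-space
`ℍ^m = {x ∈ ℝ^m : x_m ≥ 0}`. -/
theorem stmt_4 :
    ∀ p : Sigma0, ∃ (m : ℕ) (hm : 0 < m) (U : Set Sigma0),
      IsOpen U ∧ p ∈ U ∧
      ∃ W : Set {x : EuclideanSpace ℝ (Fin m) // 0 ≤ x ⟨m - 1, Nat.sub_lt hm Nat.one_pos⟩},
        IsOpen W ∧ Nonempty (U ≃ₜ W) := by
  intro p
  refine ⟨3, by norm_num, ?_⟩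
  obtain ⟨⟨a, b, c, d⟩, hmem⟩ := p
  obtain ⟨h1, h2, h3⟩ := hmem
  have hopenD : IsOpen {p : ℝ×ℝ×ℝ×ℝ | 0 < p.2.2.2} :=
    isOpen_lt continuous_const (by fun_prop)
  have hopenC : IsOpen {p : ℝ×ℝ×ℝ×ℝ | 0 < p.2.2.1} :=
    isOpen_lt continuous_const (by fun_prop)
  have hopenB : ∀ s : ℝ, IsOpen {p : ℝ×ℝ×ℝ×ℝ | 0 < s * p.2.1} := fun s =>
    isOpen_lt continuous_const (by fun_prop)
  rcases lt_trichotomy b 0 with hb | hb | hb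
  · exact chart3 fB (gB (-1)) continuous_fB (continuous_gB (-1)) _ (hopenB (-1)) Wdisc
      isOpen_Wdisc (chartB_h1 (-1) (Or.inr rfl)) (chartB_h2 (-1) (Or.inr rfl)) _
      (by simp only [mem_setOf_eq]; nlinarith)
  · rcases h2.lt_or_eq with hc | hc
    · exact chart3 fC gC continuous_fC continuous_gC _ hopenC Wdisc isOpen_Wdisc
        chartC_h1 chartC_h2 _ hc
    · have hd : 0 < d := by
        rcases h3.lt_or_eq with h | h
        · exact h
        · exfalso; nlinarith
      exact chart3 fD gD continuous_fD continuous_gD _ hopenD Wdisc isOpen_Wdisc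
        chartD_h1 chartD_h2 _ hd
  · exact chart3 fB (gB 1) continuous_fB (continuous_gB 1) _ (hopenB 1) Wdisc
      isOpen_Wdisc (chartB_h1 1 (Or.inl rfl)) (chartB_h2 1 (Or.inl rfl)) _
      (by simp only [mem_setOf_eq]; nlinarith)
end

section
/- (Proposition 3.5) The set Σ_+ := {(σ_1, σ_2, σ_3, σ_4, σ_5) ∈ ℝ^5 : σ_2^2 + σ_3^2 + σ_4^2 + σ_5^2 = 1, σ_3 ≥ 0, σ_4 ≥ 0, σ_5 > 0}, equipped with the subspace topology from ℝ^5, is a topological manifold with boundary: for every point p ∈ Σ_+ there exist a positive integer m (depending on p), an open neighborhood U of p in Σ_+, and a homeomorphism from U onto an open subset of the half-space ℍ^m = {x ∈ ℝ^m : x_m ≥ 0}. -/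
open Set

/-- The set `Σ₊ = {(σ₁,σ₂,σ₃,σ₄,σ₅) : σ₂² + σ₃² + σ₄² + σ₅² = 1, σ₃ ≥ 0, σ₄ ≥ 0, σ₅ > 0}`
with the subspace topology of ℝ⁵. -/
def SigmaPlus : Set (ℝ × ℝ × ℝ × ℝ × ℝ) :=
  {σ | σ.2.1^2 + σ.2.2.1^2 + σ.2.2.2.1^2 + σ.2.2.2.2^2 = 1 ∧
    0 ≤ σ.2.2.1 ∧ 0 ≤ σ.2.2.2.1 ∧ 0 < σ.2.2.2.2}

/-- The half-space `ℍ⁴`. -/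
def HalfSpace4 : Type := {x : EuclideanSpace ℝ (Fin 4) // 0 ≤ x ⟨3, by norm_num⟩}

noncomputable instance : TopologicalSpace HalfSpace4 :=
  inferInstanceAs (TopologicalSpace {x : EuclideanSpace ℝ (Fin 4) // 0 ≤ x ⟨3, by norm_num⟩})

/-- The chart target: an open subset of the half-space. -/
def Wset : Set HalfSpace4 :=
  {x | (x.1 1)^2 + (x.1 2)^2 + 2 * x.1 3 < 1}

/-- Forward chart map. -/
noncomputable def chartTo (σ : ℝ × ℝ × ℝ × ℝ × ℝ) : EuclideanSpace ℝ (Fin 4) :=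
  WithLp.toLp 2 ![σ.1, σ.2.1, σ.2.2.1 - σ.2.2.2.1, σ.2.2.1 * σ.2.2.2.1]

/-- Inverse chart map. -/
noncomputable def chartInv (x : EuclideanSpace ℝ (Fin 4)) : ℝ × ℝ × ℝ × ℝ × ℝ :=
  (x 0, x 1, (x 2 + Real.sqrt ((x 2)^2 + 4 * x 3))/2,
    (Real.sqrt ((x 2)^2 + 4 * x 3) - x 2)/2,
    Real.sqrt (1 - (x 1)^2 - (x 2)^2 - 2 * x 3))

lemma chartTo_mem {σ : ℝ × ℝ × ℝ × ℝ × ℝ} (h : σ ∈ SigmaPlus) :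
    0 ≤ chartTo σ ⟨3, by norm_num⟩ := by
  obtain ⟨a, b, c, d, e⟩ := σ
  obtain ⟨h1, h3, h4, h5⟩ := h
  show (0:ℝ) ≤ c * d
  exact mul_nonneg h3 h4

lemma chartTo_memW {σ : ℝ × ℝ × ℝ × ℝ × ℝ} (h : σ ∈ SigmaPlus) :
    (⟨chartTo σ, chartTo_mem h⟩ : HalfSpace4) ∈ Wset := by
  obtain ⟨a, b, c, d, e⟩ := σ
  obtain ⟨h1, h3, h4, h5⟩ := h
  show b^2 + (c - d)^2 + 2 * (c * d) < 1
  nlinarith [h1, h5, sq_nonneg e]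

lemma chartInv_mem {x : EuclideanSpace ℝ (Fin 4)} (hx : 0 ≤ x 3)
    (hW : (x 1)^2 + (x 2)^2 + 2 * x 3 < 1) : chartInv x ∈ SigmaPlus := by
  set s := Real.sqrt ((x 2)^2 + 4 * x 3) with hs
  have hs0 : 0 ≤ s := Real.sqrt_nonneg _
  have hs2 : s^2 = (x 2)^2 + 4 * x 3 := Real.sq_sqrt (by nlinarith [sq_nonneg (x 2)])
  have habs : |x 2| ≤ s := by
    rw [hs, ← Real.sqrt_sq_eq_abs]
    exact Real.sqrt_le_sqrt (by linarith)
  obtain ⟨hl, hr⟩ := abs_le.mp habs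
  have ht : 0 < 1 - (x 1)^2 - (x 2)^2 - 2 * x 3 := by linarith
  have hsqt : (Real.sqrt (1 - (x 1)^2 - (x 2)^2 - 2 * x 3))^2
      = 1 - (x 1)^2 - (x 2)^2 - 2 * x 3 := Real.sq_sqrt ht.le
  refine ⟨?_, by dsimp [chartInv]; linarith, by dsimp [chartInv]; linarith,
    by dsimp [chartInv]; exact Real.sqrt_pos.mpr ht⟩
  show (x 1)^2 + ((x 2 + s)/2)^2 + ((s - x 2)/2)^2
      + (Real.sqrt (1 - (x 1)^2 - (x 2)^2 - 2 * x 3))^2 = 1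
  rw [hsqt]; nlinarith [hs2]

lemma key_left : ∀ σ ∈ SigmaPlus, chartInv (chartTo σ) = σ := by
  rintro ⟨a, b, c, d, e⟩ ⟨h1, h3, h4, h5⟩
  have h0 : (chartTo (a, b, c, d, e) 0 : ℝ) = a := rfl
  have hx1 : (chartTo (a, b, c, d, e) 1 : ℝ) = b := rfl
  have hx2 : (chartTo (a, b, c, d, e) 2 : ℝ) = c - d := rfl
  have hx3 : (chartTo (a, b, c, d, e) 3 : ℝ) = c * d := rfl
  have hsq : (c - d)^2 + 4 * (c * d) = (c + d)^2 := by ring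
  have hsqrt : Real.sqrt ((c - d)^2 + 4 * (c * d)) = c + d := by
    rw [hsq]; exact Real.sqrt_sq (by linarith)
  have hesq : 1 - b^2 - (c - d)^2 - 2 * (c * d) = e^2 := by nlinarith [h1]
  have he : Real.sqrt (1 - b^2 - (c - d)^2 - 2 * (c * d)) = e := by
    rw [hesq]; exact Real.sqrt_sq h5.le
  show (chartTo (a,b,c,d,e) 0, chartTo (a,b,c,d,e) 1,
    (chartTo (a,b,c,d,e) 2 + Real.sqrt ((chartTo (a,b,c,d,e) 2)^2 + 4 * chartTo (a,b,c,d,e) 3))/2,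
    (Real.sqrt ((chartTo (a,b,c,d,e) 2)^2 + 4 * chartTo (a,b,c,d,e) 3) - chartTo (a,b,c,d,e) 2)/2,
    Real.sqrt (1 - (chartTo (a,b,c,d,e) 1)^2 - (chartTo (a,b,c,d,e) 2)^2
      - 2 * chartTo (a,b,c,d,e) 3)) = (a, b, c, d, e)
  rw [h0, hx1, hx2, hx3, hsqrt, he]
  simp only [Prod.mk.injEq]
  exact ⟨trivial, trivial, by ring, by ring, trivial⟩

lemma key_right : ∀ x : EuclideanSpace ℝ (Fin 4), 0 ≤ x 3 → chartTo (chartInv x) = x := by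
  intro x hx
  set s := Real.sqrt ((x 2)^2 + 4 * x 3) with hs
  have hs2 : s^2 = (x 2)^2 + 4 * x 3 := Real.sq_sqrt (by nlinarith [sq_nonneg (x 2)])
  apply PiLp.ext; intro i
  fin_cases i
  · rfl
  · rfl
  · show (x 2 + s)/2 - (s - x 2)/2 = x 2
    ring
  · show (x 2 + s)/2 * ((s - x 2)/2) = x 3
    have h : (x 2 + s)/2 * ((s - x 2)/2) = (s^2 - (x 2)^2)/4 := by ring
    rw [h, hs2]; ring

lemma cont_chartTo : Continuous chartTo := by
  have h : Continuous (fun σ : ℝ × ℝ × ℝ × ℝ × ℝ =>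
      (![σ.1, σ.2.1, σ.2.2.1 - σ.2.2.2.1, σ.2.2.1 * σ.2.2.2.1] : Fin 4 → ℝ)) := by
    apply continuous_pi
    intro i
    fin_cases i <;> simp <;> fun_prop
  exact (PiLp.continuous_toLp 2 (fun _ : Fin 4 => ℝ)).comp h

lemma cont_proj (i : Fin 4) : Continuous (fun x : EuclideanSpace ℝ (Fin 4) => x i) :=
  (EuclideanSpace.proj i).continuous

lemma cont_chartInv : Continuous chartInv := by
  unfold chartInv
  refine Continuous.prodMk (cont_proj 0) (Continuous.prodMk (cont_proj 1)
    (Continuous.prodMk ?_ (Continuous.prodMk ?_ ?_)))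
  · exact (((cont_proj 2).add (Real.continuous_sqrt.comp
      (((cont_proj 2).pow 2).add (continuous_const.mul (cont_proj 3))))).div_const 2)
  · exact (((Real.continuous_sqrt.comp
      (((cont_proj 2).pow 2).add (continuous_const.mul (cont_proj 3)))).sub
      (cont_proj 2)).div_const 2)
  · exact Real.continuous_sqrt.comp
      ((((continuous_const.sub ((cont_proj 1).pow 2)).sub ((cont_proj 2).pow 2)).sub
        (continuous_const.mul (cont_proj 3))))

/-- The global chart homeomorphism. -/
noncomputable def phi : ↥SigmaPlus ≃ₜ ↥Wset where
  toFun σ := ⟨⟨chartTo σ.1, chartTo_mem σ.2⟩, chartTo_memW σ.2⟩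
  invFun x := ⟨chartInv x.1.1, chartInv_mem x.1.2 x.2⟩
  left_inv σ := Subtype.ext (key_left σ.1 σ.2)
  right_inv x := Subtype.ext (Subtype.ext (key_right x.1.1 x.1.2))
  continuous_toFun := by
    apply Continuous.subtype_mk
    apply Continuous.subtype_mk
    exact cont_chartTo.comp continuous_subtype_val
  continuous_invFun := by
    apply Continuous.subtype_mk
    exact cont_chartInv.comp (continuous_subtype_val.comp continuous_subtype_val)

lemma Wset_isOpen : IsOpen Wset := by
  have hc : Continuous (fun x : HalfSpace4 => (x.1 1)^2 + (x.1 2)^2 + 2 * x.1 3) := by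
    refine Continuous.add (Continuous.add ?_ ?_) ?_
    · exact ((cont_proj 1).comp continuous_subtype_val).pow 2
    · exact ((cont_proj 2).comp continuous_subtype_val).pow 2
    · exact continuous_const.mul ((cont_proj 3).comp continuous_subtype_val)
  exact isOpen_Iio.preimage hc

/-- (Proposition 3.5) `Σ₊` is a topological manifold with boundary: every point has an
open neighborhood homeomorphic to an open subset of some half-space
`ℍ^m = {x ∈ ℝ^m : x_m ≥ 0}`. -/
theorem stmt_5 :
    ∀ p : SigmaPlus, ∃ (m : ℕ) (hm : 0 < m) (U : Set SigmaPlus),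
      IsOpen U ∧ p ∈ U ∧
      ∃ W : Set {x : EuclideanSpace ℝ (Fin m) // 0 ≤ x ⟨m - 1, Nat.sub_lt hm Nat.one_pos⟩},
        IsOpen W ∧ Nonempty (U ≃ₜ W) := by
  intro p
  refine ⟨4, by norm_num, univ, isOpen_univ, mem_univ p, Wset, Wset_isOpen,
    ⟨(Homeomorph.Set.univ _).trans phi⟩⟩
end

section
/- Let γ ∈ (0, 2) and let V, χ : ℝ → ℝ be positive C^1 functions. Let σ = (σ_1, σ_2, σ_3, σ_4, σ_5) : I → ℝ^5 be a C^1 solution of the Hubble-normalized system with σ_3(τ) > 0 and σ_4(τ) > 0 for all τ ∈ I. Then the function Z_1(τ) := (σ_3(τ)/σ_4(τ))^2 · V(σ_1(τ)) · χ(σ_1(τ))^{2 − 3γ/2} satisfies Z_1'(τ) = −γ Z_1(τ) for all τ ∈ I; in particular Z_1 is strictly monotonically decreasing. -/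
open Set

/-- Along any solution of the Hubble-normalized system with `σ₃ > 0` and `σ₄ > 0`, the
function `Z₁ = (σ₃/σ₄)² V(σ₁) χ(σ₁)^{2−3γ/2}` satisfies `Z₁' = −γ Z₁`; in particular
`Z₁` is strictly monotonically decreasing. -/
theorem stmt_7
    (γ : ℝ) (hγ0 : 0 < γ) (hγ2 : γ < 2)
    (V V' χ χ' : ℝ → ℝ)
    (hV : ∀ x, HasDerivAt V (V' x) x) (hVpos : ∀ x, 0 < V x)
    (hχ : ∀ x, HasDerivAt χ (χ' x) x) (hχpos : ∀ x, 0 < χ x)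
    (a b : ℝ) (σ1 σ2 σ3 σ4 σ5 : ℝ → ℝ)
    (h1 : ∀ τ ∈ Ioo a b, HasDerivAt σ1 (Real.sqrt (2/3) * σ2 τ) τ)
    (h2 : ∀ τ ∈ Ioo a b, HasDerivAt σ2
      ((σ2 τ)^3 + (1/6) * (3*γ*(σ3 τ)^2 + 4*(σ5 τ)^2 - 6) * σ2 τ
        - ((σ4 τ)^2 / Real.sqrt 6) * (V' (σ1 τ) / V (σ1 τ))
        + ((4 - 3*γ) * (σ3 τ)^2 / (2 * Real.sqrt 6)) * (χ' (σ1 τ) / χ (σ1 τ))) τ)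
    (h3 : ∀ τ ∈ Ioo a b, HasDerivAt σ3
      ((1/6) * σ3 τ * (6*(σ2 τ)^2 + 3*γ*((σ3 τ)^2 - 1) + 4*(σ5 τ)^2)
        - ((4 - 3*γ) * σ2 τ * σ3 τ / (2 * Real.sqrt 6)) * (χ' (σ1 τ) / χ (σ1 τ))) τ)
    (h4 : ∀ τ ∈ Ioo a b, HasDerivAt σ4
      ((1/6) * σ4 τ * (6*(σ2 τ)^2 + 3*γ*(σ3 τ)^2 + 4*(σ5 τ)^2)
        + (Real.sqrt 6 / 6) * σ2 τ * σ4 τ * (V' (σ1 τ) / V (σ1 τ))) τ)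
    (h5 : ∀ τ ∈ Ioo a b, HasDerivAt σ5
      ((1/6) * σ5 τ * (6*(σ2 τ)^2 + 3*γ*(σ3 τ)^2 + 4*(σ5 τ)^2 - 4)) τ)
    (h3pos : ∀ τ ∈ Ioo a b, 0 < σ3 τ) (h4pos : ∀ τ ∈ Ioo a b, 0 < σ4 τ) :
    (∀ τ ∈ Ioo a b, HasDerivAt
        (fun s => (σ3 s / σ4 s)^2 * V (σ1 s) * χ (σ1 s) ^ (2 - 3*γ/2))
        (-γ * ((σ3 τ / σ4 τ)^2 * V (σ1 τ) * χ (σ1 τ) ^ (2 - 3*γ/2))) τ)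
    ∧ StrictAntiOn
        (fun s => (σ3 s / σ4 s)^2 * V (σ1 s) * χ (σ1 s) ^ (2 - 3*γ/2))
        (Ioo a b) := by
  have key : ∀ τ ∈ Ioo a b, HasDerivAt
      (fun s => (σ3 s / σ4 s)^2 * V (σ1 s) * χ (σ1 s) ^ (2 - 3*γ/2))
      (-γ * ((σ3 τ / σ4 τ)^2 * V (σ1 τ) * χ (σ1 τ) ^ (2 - 3*γ/2))) τ := by
    intro τ hτ
    have h3p := h3pos τ hτ
    have h4p := h4pos τ hτ
    have hVp := hVpos (σ1 τ)
    have hχp := hχpos (σ1 τ)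
    have hd1 := h1 τ hτ
    have hdq : HasDerivAt (fun s => σ3 s / σ4 s) _ τ := (h3 τ hτ).div (h4 τ hτ) h4p.ne'
    have hdq2 := hdq.pow 2
    have hdV : HasDerivAt (fun s => V (σ1 s)) (V' (σ1 τ) * (Real.sqrt (2/3) * σ2 τ)) τ :=
      (hV (σ1 τ)).comp τ hd1
    have hdχ : HasDerivAt (fun s => χ (σ1 s)) (χ' (σ1 τ) * (Real.sqrt (2/3) * σ2 τ)) τ :=
      (hχ (σ1 τ)).comp τ hd1
    have hdχp := hdχ.rpow_const (p := 2 - 3*γ/2) (Or.inl hχp.ne')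
    have hfull := (hdq2.mul hdV).mul hdχp
    convert hfull using 1
    case e'_4 => rfl
    case e'_5 => rfl
    case e'_8 => rfl
    have hs6 : Real.sqrt 6 > 0 := Real.sqrt_pos.mpr (by norm_num)
    have hs6sq : Real.sqrt 6 * Real.sqrt 6 = 6 := Real.mul_self_sqrt (by norm_num)
    have hq6 : Real.sqrt (2/3) * Real.sqrt 6 = 2 := by
      rw [← Real.sqrt_mul (by norm_num)]
      rw [show (2/3 : ℝ) * 6 = 2^2 by norm_num, Real.sqrt_sq (by norm_num)]
    have hrp : χ (σ1 τ) ^ (2 - 3*γ/2 - 1) = χ (σ1 τ) ^ (2 - 3*γ/2) / χ (σ1 τ) := by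
      rw [Real.rpow_sub hχp, Real.rpow_one]
    have hq : Real.sqrt (2/3) = Real.sqrt 6 / 3 := by
      rw [show (2/3:ℝ) = 6/9 by norm_num, show (9:ℝ) = 3^2 by norm_num,
        Real.sqrt_div' 6 (by norm_num), Real.sqrt_sq (by norm_num : (0:ℝ) ≤ 3)]
    have h6sq : Real.sqrt 6 ^ 2 = 6 := Real.sq_sqrt (by norm_num)
    have h6cube : Real.sqrt 6 ^ 3 = 6 * Real.sqrt 6 := by
      rw [pow_succ, h6sq, mul_comm]
    simp only [Pi.mul_apply, Pi.pow_apply]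
    rw [hrp, hq]
    field_simp
    ring_nf
    simp only [h6cube, h6sq]
    have h4i : σ4 τ * (σ4 τ)⁻¹ = 1 := mul_inv_cancel₀ h4p.ne'
    linear_combination (γ * σ3 τ * V (σ1 τ) * Real.sqrt 6 * χ (σ1 τ) * 36
      - γ * σ3 τ * V (σ1 τ) * σ2 τ * χ' (σ1 τ) * 108
      + σ3 τ * V (σ1 τ) * σ2 τ * χ' (σ1 τ) * 144
      + σ3 τ * χ (σ1 τ) * σ2 τ * V' (σ1 τ) * 72) * h4i
  refine ⟨key, ?_⟩
  have hZpos : ∀ τ ∈ Ioo a b,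
      0 < (σ3 τ / σ4 τ)^2 * V (σ1 τ) * χ (σ1 τ) ^ (2 - 3*γ/2) := by
    intro τ hτ
    have h1 : 0 < (σ3 τ / σ4 τ)^2 :=
      pow_pos (div_pos (h3pos τ hτ) (h4pos τ hτ)) 2
    exact mul_pos (mul_pos h1 (hVpos _)) (Real.rpow_pos_of_pos (hχpos _) _)
  apply strictAntiOn_of_deriv_neg (convex_Ioo a b)
  · intro τ hτ
    exact ((key τ hτ).continuousAt).continuousWithinAt
  · intro τ hτ
    rw [interior_Ioo] at hτ
    rw [(key τ hτ).deriv]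
    have := hZpos τ hτ
    nlinarith
end

section
/- Let γ ∈ (0, 2) and let χ : ℝ → ℝ be a positive C^1 function. Let (σ_1, σ_2, σ_5) : I → ℝ^3 be a C^1 solution of the reduced system σ_1' = −√(2/3)σ_2; σ_2' = (1/2)(1 − σ_2^2)((2−γ)σ_2 − ((4−3γ)/√6)·χ'(σ_1)/χ(σ_1)) − ((4−3γ)σ_5^2/6)(σ_2 − (√6/2)·χ'(σ_1)/χ(σ_1)); σ_5' = −(1/6)σ_5(3(2−γ)σ_2^2 − (4−3γ)(1−σ_5^2)), with σ_2(τ)^2 + σ_5(τ)^2 < 1 and σ_5(τ) > 0 for all τ ∈ I. Then the function M_3(τ) := (1 − σ_2(τ)^2 − σ_5(τ)^2)^2 · χ(σ_1(τ))^{4−3γ} / σ_5(τ)^4 satisfies M_3'(τ) = −2(4/3 − γ)·M_3(τ) for all τ ∈ I. -/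
open Set

/-- Along any solution of the reduced system (on the invariant set `σ₄ = 0` of the
time-reversed Hubble-normalized flat FRW system) with `σ₂² + σ₅² < 1` and `σ₅ > 0`, the
function `M₃ = (1 − σ₂² − σ₅²)² χ(σ₁)^{4−3γ} / σ₅⁴` satisfies `M₃' = −2(4/3 − γ) M₃`. -/
theorem stmt_8
    (γ : ℝ) (hγ0 : 0 < γ) (hγ2 : γ < 2)
    (χ χ' : ℝ → ℝ)
    (hχ : ∀ x, HasDerivAt χ (χ' x) x) (hχpos : ∀ x, 0 < χ x)
    (a b : ℝ) (σ1 σ2 σ5 : ℝ → ℝ)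
    (h1 : ∀ τ ∈ Ioo a b, HasDerivAt σ1 (-(Real.sqrt (2/3)) * σ2 τ) τ)
    (h2 : ∀ τ ∈ Ioo a b, HasDerivAt σ2
      ((1/2) * (1 - (σ2 τ)^2) *
          ((2 - γ) * σ2 τ - ((4 - 3*γ) / Real.sqrt 6) * (χ' (σ1 τ) / χ (σ1 τ)))
        - ((4 - 3*γ) * (σ5 τ)^2 / 6) *
          (σ2 τ - (Real.sqrt 6 / 2) * (χ' (σ1 τ) / χ (σ1 τ)))) τ)
    (h5 : ∀ τ ∈ Ioo a b, HasDerivAt σ5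
      (-(1/6) * σ5 τ * (3*(2 - γ)*(σ2 τ)^2 - (4 - 3*γ)*(1 - (σ5 τ)^2))) τ)
    (hin : ∀ τ ∈ Ioo a b, (σ2 τ)^2 + (σ5 τ)^2 < 1)
    (h5pos : ∀ τ ∈ Ioo a b, 0 < σ5 τ) :
    ∀ τ ∈ Ioo a b, HasDerivAt
      (fun s => (1 - (σ2 s)^2 - (σ5 s)^2)^2 * χ (σ1 s) ^ (4 - 3*γ) / (σ5 s)^4)
      (-2 * (4/3 - γ) *
        ((1 - (σ2 τ)^2 - (σ5 τ)^2)^2 * χ (σ1 τ) ^ (4 - 3*γ) / (σ5 τ)^4)) τ := by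
  intro τ hτ
  have hχτ : (0:ℝ) < χ (σ1 τ) := hχpos (σ1 τ)
  have hχne : χ (σ1 τ) ≠ 0 := ne_of_gt hχτ
  have h5ne : σ5 τ ≠ 0 := ne_of_gt (h5pos τ hτ)
  have hB2 : Real.sqrt 6 * Real.sqrt 6 = 6 := Real.mul_self_sqrt (by norm_num)
  have hBpos : (0:ℝ) < Real.sqrt 6 := Real.sqrt_pos.2 (by norm_num)
  have hBne : Real.sqrt 6 ≠ 0 := ne_of_gt hBpos
  -- derivative of u = 1 - σ2² - σ5²
  have hu : HasDerivAt (fun s => 1 - (σ2 s)^2 - (σ5 s)^2)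
      (0 - (2 * σ2 τ ^ 1 * ((1/2) * (1 - (σ2 τ)^2) *
          ((2 - γ) * σ2 τ - ((4 - 3*γ) / Real.sqrt 6) * (χ' (σ1 τ) / χ (σ1 τ)))
        - ((4 - 3*γ) * (σ5 τ)^2 / 6) *
          (σ2 τ - (Real.sqrt 6 / 2) * (χ' (σ1 τ) / χ (σ1 τ)))))
       - 2 * σ5 τ ^ 1 *
        (-(1/6) * σ5 τ * (3*(2 - γ)*(σ2 τ)^2 - (4 - 3*γ)*(1 - (σ5 τ)^2)))) τ := by
    exact ((hasDerivAt_const τ (1:ℝ)).sub ((h2 τ hτ).pow 2)).sub ((h5 τ hτ).pow 2)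
  have hu2 := hu.pow 2
  -- derivative of χ(σ1 s) ^ (4 - 3γ)
  have hcomp : HasDerivAt (fun s => χ (σ1 s))
      (χ' (σ1 τ) * (-(Real.sqrt (2/3)) * σ2 τ)) τ :=
    (hχ (σ1 τ)).comp τ (h1 τ hτ)
  have hrp : HasDerivAt (fun s => χ (σ1 s) ^ (4 - 3*γ))
      ((χ' (σ1 τ) * (-(Real.sqrt (2/3)) * σ2 τ)) * (4 - 3*γ)
        * χ (σ1 τ) ^ (4 - 3*γ - 1)) τ :=
    hcomp.rpow_const (Or.inl hχne)
  have hnum := hu2.mul hrp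
  have hden := (h5 τ hτ).pow 4
  have hfull := hnum.div hden (pow_ne_zero 4 h5ne)
  convert hfull using 1
  case e'_4 => rfl
  case e'_5 => rfl
  case e'_8 => rfl
  have hsplit : χ (σ1 τ) ^ (4 - 3*γ - 1) = χ (σ1 τ) ^ (4 - 3*γ) / χ (σ1 τ) := by
    rw [Real.rpow_sub hχτ, Real.rpow_one]
  have hA : Real.sqrt (2/3) = 2 * (Real.sqrt 6)⁻¹ := by
    rw [eq_comm, mul_inv_eq_iff_eq_mul₀ hBne, ← Real.sqrt_mul (by norm_num : (0:ℝ) ≤ 2/3)]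
    rw [show (2/3 * 6 : ℝ) = 2^2 by norm_num, Real.sqrt_sq (by norm_num : (0:ℝ) ≤ 2)]
  have hkey : Real.sqrt 6 / 2 = 3 * (Real.sqrt 6)⁻¹ := by
    field_simp
    linarith [hB2]
  have hkey2 : (4 - 3*γ) / Real.sqrt 6 = (4 - 3*γ) * (Real.sqrt 6)⁻¹ :=
    div_eq_mul_inv _ _
  simp only [Pi.mul_apply, Pi.pow_apply]
  rw [hsplit, hA, hkey, hkey2]
  field_simp
  ring
end

section
/- Let γ ∈ (0, 2) and let χ : ℝ → ℝ be a positive C^2 function. Consider the planar vector field f(σ_1, σ_2) = (−√(2/3)σ_2, (1/2)(1 − σ_2^2)((2−γ)σ_2 − ((4−3γ)/√6)·χ'(σ_1)/χ(σ_1))) on the open set S' = (−K, K) × (−1, 1) for K > 0, and the Dulac function B(σ_1, σ_2) = (1 − σ_2^2)^{−1}. Then the divergence ∂/∂σ_1 (B f_1) + ∂/∂σ_2 (B f_2) is identically equal to (2 − γ)/2 > 0 on S'; consequently f has no periodic orbit contained in S'. -/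
open Set

/-- With the Dulac function `B(σ₁,σ₂) = (1 − σ₂²)⁻¹`, the divergence of `B·f` for the
planar vector field `f` on `S' = (−K,K) × (−1,1)` is identically `(2 − γ)/2 > 0`;
consequently `f` has no periodic orbit contained in `S'`. -/
theorem stmt_9
    (γ : ℝ) (hγ0 : 0 < γ) (hγ2 : γ < 2)
    (χ χ' χ'' : ℝ → ℝ)
    (hχd : ∀ x, HasDerivAt χ (χ' x) x)
    (hχd' : ∀ x, HasDerivAt χ' (χ'' x) x)
    (hχpos : ∀ x, 0 < χ x)
    (K : ℝ) (hK : 0 < K)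
    (f : ℝ × ℝ → ℝ × ℝ)
    (hf : ∀ p : ℝ × ℝ, f p =
      (-(Real.sqrt (2/3)) * p.2,
        (1/2) * (1 - p.2^2) *
          ((2 - γ) * p.2 - ((4 - 3*γ) / Real.sqrt 6) * (χ' p.1 / χ p.1)))) :
    (∀ p ∈ (Ioo (-K) K) ×ˢ (Ioo (-1 : ℝ) 1),
      deriv (fun s : ℝ => (1 - p.2^2)⁻¹ * (f (s, p.2)).1) p.1
        + deriv (fun s : ℝ => (1 - s^2)⁻¹ * (f (p.1, s)).2) p.2
      = (2 - γ) / 2)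
    ∧ 0 < (2 - γ) / 2
    ∧ ¬ ∃ (x : ℝ → ℝ × ℝ) (T : ℝ), 0 < T ∧
        (∀ t : ℝ, HasDerivAt x (f (x t)) t) ∧
        (∀ t : ℝ, x t ∈ (Ioo (-K) K) ×ˢ (Ioo (-1 : ℝ) 1)) ∧
        (∀ t : ℝ, x (t + T) = x t) ∧
        (∃ t s : ℝ, x t ≠ x s) := by
  have hc : (0:ℝ) < Real.sqrt (2/3) := Real.sqrt_pos.mpr (by norm_num)
  set c := Real.sqrt (2/3) with hcdef
  set A := (4 - 3*γ) / Real.sqrt 6 with hAdef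
  have hχne : ∀ y, χ y ≠ 0 := fun y => (hχpos y).ne'
  refine ⟨?_, by linarith, ?_⟩
  · intro p hp
    have hp2 : p.2 ∈ Ioo (-1:ℝ) 1 := hp.2
    have h1 : (fun s : ℝ => (1 - p.2^2)⁻¹ * (f (s, p.2)).1)
        = fun _ : ℝ => (1 - p.2^2)⁻¹ * (-c * p.2) := by
      funext s; rw [hf]
    have h2 : deriv (fun s : ℝ => (1 - s^2)⁻¹ * (f (p.1, s)).2) p.2 = (2-γ)/2 := by
      have heq : (fun s : ℝ => (1 - s^2)⁻¹ * (f (p.1, s)).2)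
          =ᶠ[nhds p.2] fun s => (1/2) * ((2-γ)*s - A * (χ' p.1 / χ p.1)) := by
        filter_upwards [Ioo_mem_nhds hp2.1 hp2.2] with s hs
        rw [hf]
        have h0 : (0:ℝ) < 1 - s^2 := by nlinarith [hs.1, hs.2]
        field_simp
      rw [heq.deriv_eq]
      have hd : HasDerivAt (fun s : ℝ => (1/2) * ((2-γ)*s - A * (χ' p.1 / χ p.1)))
          ((1/2) * ((2-γ)*1)) p.2 :=
        (((hasDerivAt_id p.2).const_mul (2-γ)).sub_const _).const_mul _
      rw [hd.deriv]; ring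
    rw [h1, h2, deriv_const]; ring
  · rintro ⟨x, T, hT, hx, hmem, hper, t0', s0', hne⟩
    have hb : ∀ t, (0:ℝ) < 1 - ((x t).2)^2 := by
      intro t
      have h := (hmem t).2
      nlinarith [h.1, h.2]
    have hx1 : ∀ t, HasDerivAt (fun t => (x t).1) (-c * (x t).2) t := by
      intro t
      have h := (ContinuousLinearMap.fst ℝ ℝ ℝ).hasFDerivAt.comp_hasDerivAt t (hx t)
      rw [hf] at h; exact h
    have hx2d : ∀ t, HasDerivAt (fun t => (x t).2)
        ((1/2) * (1 - ((x t).2)^2) * ((2-γ)*(x t).2 - A * (χ' ((x t).1) / χ ((x t).1)))) t := by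
      intro t
      have h := (ContinuousLinearMap.snd ℝ ℝ ℝ).hasFDerivAt.comp_hasDerivAt t (hx t)
      rw [hf] at h; exact h
    have hc2 : Continuous fun t => (x t).2 :=
      continuous_iff_continuousAt.2 fun t => (hx2d t).continuousAt
    have hk : Continuous fun t => ((x t).2)^2 := hc2.pow 2
    have hG : ∀ t, HasDerivAt
        (fun t => Real.log (1 - ((x t).2)^2) + (A/c) * Real.log (χ ((x t).1)))
        (-(2-γ) * ((x t).2)^2) t := by
      intro t
      have hinner : HasDerivAt (fun t => 1 - ((x t).2)^2)
          (-(2 * (x t).2 *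
            ((1/2) * (1 - ((x t).2)^2) * ((2-γ)*(x t).2 - A * (χ' ((x t).1) / χ ((x t).1)))))) t := by
        have h := ((hx2d t).pow 2).const_sub (1:ℝ)
        refine h.congr_deriv ?_
        push_cast
        ring
      have hlog1 : HasDerivAt (fun t => Real.log (1 - ((x t).2)^2))
          ((1 - ((x t).2)^2)⁻¹ * (-(2 * (x t).2 *
            ((1/2) * (1 - ((x t).2)^2) * ((2-γ)*(x t).2 - A * (χ' ((x t).1) / χ ((x t).1))))))) t :=
        by have := (Real.hasDerivAt_log (hb t).ne').comp t hinner; exact this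
      have hχc : HasDerivAt (fun t => χ ((x t).1)) (χ' ((x t).1) * (-c * (x t).2)) t := by
        have h := (hχd ((x t).1)).comp t (hx1 t)
        exact h
      have hlog2 : HasDerivAt (fun t => Real.log (χ ((x t).1)))
          ((χ ((x t).1))⁻¹ * (χ' ((x t).1) * (-c * (x t).2))) t := by
        have h := (Real.hasDerivAt_log (hχne ((x t).1))).comp t hχc
        exact h
      have h := hlog1.add (hlog2.const_mul (A/c))
      refine h.congr_deriv ?_
      have e1 : (1:ℝ) - ((x t).2)^2 ≠ 0 := (hb t).ne'
      have e2 : χ ((x t).1) ≠ 0 := hχne _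
      have e3 : c ≠ 0 := hc.ne'
      field_simp
      ring
    have hzero : ∀ t, (x t).2 = 0 := by
      intro τ
      by_contra hτ
      have hkpos : 0 < ((x τ).2)^2 := (sq_nonneg _).lt_of_ne (Ne.symm (pow_ne_zero 2 hτ))
      have hcint : Continuous fun s : ℝ => -(2-γ) * ((x s).2)^2 := continuous_const.mul hk
      have hint0 : ∫ s in τ..(τ+T), -(2-γ) * ((x s).2)^2 = 0 := by
        rw [intervalIntegral.integral_eq_sub_of_hasDerivAt (fun s _ => hG s)
          (hcint.intervalIntegrable _ _), hper τ]
        ring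
      have hint : ∫ s in τ..(τ+T), ((x s).2)^2 = 0 := by
        rw [intervalIntegral.integral_const_mul] at hint0
        have hne2 : -(2-γ) ≠ 0 := by intro h; apply hγ2.ne; linarith
        exact (mul_eq_zero.mp hint0).resolve_left hne2
      have hev : ∀ᶠ s in nhds τ, 0 < ((x s).2)^2 :=
        hk.continuousAt.eventually (eventually_gt_nhds hkpos)
      rw [Metric.eventually_nhds_iff] at hev
      obtain ⟨ε, hε, hball⟩ := hev
      set δ := min (ε/2) T with hδdef
      have hδ0 : 0 < δ := lt_min (by linarith) hT
      have hδT : δ ≤ T := min_le_right _ _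
      have hpos1 : 0 < ∫ s in τ..(τ+δ), ((x s).2)^2 := by
        apply intervalIntegral.intervalIntegral_pos_of_pos_on (hk.intervalIntegrable _ _)
        · intro s hs
          apply hball
          rw [Real.dist_eq, abs_lt]
          constructor
          · have := hs.1; have hε2 : δ ≤ ε/2 := min_le_left _ _; linarith
          · have := hs.2; have hε2 : δ ≤ ε/2 := min_le_left _ _; linarith
        · linarith
      have hnn : 0 ≤ ∫ s in (τ+δ)..(τ+T), ((x s).2)^2 :=
        intervalIntegral.integral_nonneg (by linarith) (fun s _ => sq_nonneg _)
      have hsplit : (∫ s in τ..(τ+δ), ((x s).2)^2) + ∫ s in (τ+δ)..(τ+T), ((x s).2)^2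
          = ∫ s in τ..(τ+T), ((x s).2)^2 :=
        intervalIntegral.integral_add_adjacent_intervals
          (hk.intervalIntegrable _ _) (hk.intervalIntegrable _ _)
      rw [hint] at hsplit
      linarith
    have hd0 : ∀ t, HasDerivAt (fun t => (x t).1) 0 t := by
      intro t
      have h := hx1 t
      rw [hzero t, mul_zero] at h
      exact h
    have hx1const : (x t0').1 = (x s0').1 :=
      is_const_of_deriv_eq_zero (fun t => (hd0 t).differentiableAt)
        (fun t => (hd0 t).deriv) t0' s0'
    exact hne (Prod.ext_iff.mpr ⟨hx1const, by rw [hzero, hzero]⟩)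
end

section
/- Let γ ∈ (0, 2) and let χ : ℝ → ℝ be a positive C^2 function. Let q_1 ∈ ℝ satisfy χ'(q_1) = 0, and consider the planar vector field f(σ_1, σ_2) = (−√(2/3)σ_2, (1/2)(1 − σ_2^2)((2−γ)σ_2 − ((4−3γ)/√6)·χ'(σ_1)/χ(σ_1))). Then (q_1, 0) is an equilibrium of f, the Jacobian matrix of f at (q_1, 0) equals [[0, −√(2/3)], [−((4−3γ)/(2√6))·χ''(q_1)/χ(q_1), (2−γ)/2]], its characteristic polynomial is λ^2 − 2Δ_1 λ − Δ_2·χ''(q_1)/χ(q_1) with Δ_1 = (2−γ)/4 and Δ_2 = (4−3γ)/6 (so its eigenvalues are Δ_1 ± √(Δ_1^2 + Δ_2·χ''(q_1)/χ(q_1))), and at least one eigenvalue has positive real part. -/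
open Set

/-- At a stationary point `q₁` of the coupling function `χ`, the point `(q₁, 0)` is an
equilibrium of the planar vector field `f`; the Jacobian matrix of `f` there is
`[[0, −√(2/3)], [−((4−3γ)/(2√6))·χ''(q₁)/χ(q₁), (2−γ)/2]]`, with characteristic
polynomial `λ² − 2Δ₁λ − Δ₂·χ''(q₁)/χ(q₁)` (`Δ₁ = (2−γ)/4`, `Δ₂ = (4−3γ)/6`), so that the
eigenvalues are `Δ₁ ± √(Δ₁² + Δ₂·χ''(q₁)/χ(q₁))`, and at least one eigenvalue has
positive real part. -/
theorem stmt_10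
    (γ : ℝ) (hγ0 : 0 < γ) (hγ2 : γ < 2)
    (χ χ' χ'' : ℝ → ℝ)
    (hχd : ∀ x, HasDerivAt χ (χ' x) x)
    (hχd' : ∀ x, HasDerivAt χ' (χ'' x) x)
    (hχpos : ∀ x, 0 < χ x)
    (q1 : ℝ) (hq1 : χ' q1 = 0)
    (f : ℝ × ℝ → ℝ × ℝ)
    (hf : ∀ p : ℝ × ℝ, f p =
      (-(Real.sqrt (2/3)) * p.2,
        (1/2) * (1 - p.2^2) *
          ((2 - γ) * p.2 - ((4 - 3*γ) / Real.sqrt 6) * (χ' p.1 / χ p.1)))) :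
    -- `(q₁, 0)` is an equilibrium
    f (q1, 0) = (0, 0)
    -- the Jacobian matrix of `f` at `(q₁, 0)`
    ∧ deriv (fun s => (f (s, 0)).1) q1 = 0
    ∧ deriv (fun s => (f (q1, s)).1) 0 = -(Real.sqrt (2/3))
    ∧ deriv (fun s => (f (s, 0)).2) q1
        = -((4 - 3*γ) / (2 * Real.sqrt 6)) * (χ'' q1 / χ q1)
    ∧ deriv (fun s => (f (q1, s)).2) 0 = (2 - γ) / 2
    -- the characteristic polynomial of that matrix
    ∧ (∀ lam : ℝ,
        (lam • (1 : Matrix (Fin 2) (Fin 2) ℝ)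
          - !![0, -(Real.sqrt (2/3));
              -((4 - 3*γ) / (2 * Real.sqrt 6)) * (χ'' q1 / χ q1), (2 - γ) / 2]).det
        = lam^2 - 2 * ((2 - γ)/4) * lam - ((4 - 3*γ)/6) * (χ'' q1 / χ q1))
    -- the eigenvalues are `Δ₁ ± √(Δ₁² + Δ₂ χ''(q₁)/χ(q₁))`
    ∧ (∀ lam : ℝ,
        lam^2 - 2 * ((2 - γ)/4) * lam - ((4 - 3*γ)/6) * (χ'' q1 / χ q1) = 0 ↔
        (lam - (2 - γ)/4)^2 = ((2 - γ)/4)^2 + ((4 - 3*γ)/6) * (χ'' q1 / χ q1))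
    -- at least one eigenvalue has positive real part
    ∧ (∃ lam : ℂ,
        lam^2 - 2 * (((2 - γ)/4 : ℝ) : ℂ) * lam
          - ((((4 - 3*γ)/6) * (χ'' q1 / χ q1) : ℝ) : ℂ) = 0 ∧ 0 < lam.re) := by

  have hχne : ∀ x, χ x ≠ 0 := fun x => ne_of_gt (hχpos x)
  have h6pos : (0:ℝ) < Real.sqrt 6 := Real.sqrt_pos.2 (by norm_num)
  have h6ne : Real.sqrt 6 ≠ 0 := ne_of_gt h6pos
  have hsqq : Real.sqrt (2/3) * Real.sqrt 6 = 2 := by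
    rw [← Real.sqrt_mul (by norm_num : (0:ℝ) ≤ 2/3)]
    rw [show (2/3 : ℝ) * 6 = 4 by norm_num, show (4:ℝ) = 2^2 by norm_num,
      Real.sqrt_sq (by norm_num : (0:ℝ) ≤ 2)]
  refine ⟨?_, ?_, ?_, ?_, ?_, ?_, ?_, ?_⟩
  · rw [hf]; simp [hq1]
  · have : (fun s => (f (s, 0)).1) = fun _ : ℝ => (0:ℝ) := by
      funext s; rw [hf]; simp
    rw [this, deriv_const]
  · have : (fun s => (f (q1, s)).1) = fun s : ℝ => -(Real.sqrt (2/3)) * s := by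
      funext s; rw [hf]
    rw [this]
    simpa using ((hasDerivAt_id (0:ℝ)).const_mul (-(Real.sqrt (2/3)))).deriv
  · have hdiv : HasDerivAt (fun s => χ' s / χ s)
        ((χ'' q1 * χ q1 - χ' q1 * χ' q1) / (χ q1)^2) q1 :=
      (hχd' q1).div (hχd q1) (hχne q1)
    have : (fun s => (f (s, 0)).2)
        = fun s => (-(1/2) * ((4 - 3*γ) / Real.sqrt 6)) * (χ' s / χ s) := by
      funext s; rw [hf]; ring
    rw [this, (hdiv.const_mul _).deriv, hq1]
    have hx : (χ'' q1 * χ q1 - 0 * 0) / (χ q1)^2 = χ'' q1 / χ q1 := by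
      field_simp [hχne q1]; ring
    rw [hx]; ring
  · have : (fun s => (f (q1, s)).2)
        = fun s => (1/2 : ℝ) * ((1 - s^2) * ((2 - γ) * s)) := by
      funext s; rw [hf]; simp [hq1]; ring
    rw [this]
    have h1 : HasDerivAt (fun s : ℝ => 1 - s^2) (-(2 * 0)) 0 := by
      simpa using ((hasDerivAt_pow 2 (0:ℝ)).const_sub 1)
    have h2 : HasDerivAt (fun s : ℝ => (2 - γ) * s) (2 - γ) 0 := by
      simpa using (hasDerivAt_id (0:ℝ)).const_mul (2 - γ)
    have := ((h1.mul h2).const_mul (1/2 : ℝ)).deriv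
    refine this.trans ?_
    ring
  · intro lam
    rw [Matrix.det_fin_two]
    have key : Real.sqrt (2/3) = 2 / Real.sqrt 6 := by
      rw [eq_div_iff h6ne]; exact hsqq
    simp [Matrix.smul_apply, Matrix.one_apply, key]
    have h66 : Real.sqrt 6 * Real.sqrt 6 = 6 := Real.mul_self_sqrt (by norm_num)
    field_simp
    rw [show Real.sqrt 6 ^ 2 = 6 by
      linear_combination h66]
    ring
  · intro lam
    constructor <;> intro h <;> nlinarith [h]
  · set a : ℝ := (2 - γ)/4 with ha
    set K : ℝ := ((4 - 3*γ)/6) * (χ'' q1 / χ q1) with hK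
    have hapos : 0 < a := by rw [ha]; linarith
    rcases le_or_gt 0 (a^2 + K) with hD | hD
    · refine ⟨((a + Real.sqrt (a^2 + K) : ℝ) : ℂ), ?_, ?_⟩
      · have hs : Real.sqrt (a^2 + K) * Real.sqrt (a^2 + K) = a^2 + K :=
          Real.mul_self_sqrt hD
        push_cast
        have : (a + Real.sqrt (a^2 + K))^2 - 2 * a * (a + Real.sqrt (a^2 + K)) - K = 0 := by
          nlinarith [hs]
        exact_mod_cast congrArg (fun x : ℝ => (x : ℂ)) this
      · simp only [Complex.ofReal_re]
        positivity
    · set b : ℝ := Real.sqrt (-(a^2 + K)) with hb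
      have hb2 : b^2 = -(a^2 + K) := Real.sq_sqrt (by linarith)
      refine ⟨(a : ℂ) + (b : ℂ) * Complex.I, ?_, ?_⟩
      · have hb2' : ((b : ℂ))^2 = -((a:ℂ)^2) - (K:ℂ) := by
          have := congrArg (fun x : ℝ => (x : ℂ)) hb2
          push_cast at this
          linear_combination this
        linear_combination ((b:ℂ))^2 * Complex.I_sq - hb2'
      · simp [hapos]
end

section
/- Let γ ∈ (0, 2), let V ∈ C^2 and χ ∈ C^1 be positive functions, and let σ_{1c} ∈ ℝ satisfy V'(σ_{1c}) = 0. Then Q_2 := (σ_{1c}, 0, 0, 0) is an equilibrium point of the four-dimensional projected system, and the characteristic polynomial of the Jacobian matrix of the system at Q_2 equals (λ + 2/3)(λ + γ/2)(λ^2 + λ + V''(σ_{1c})/(3V(σ_{1c}))); equivalently, the eigenvalues of the linearization are −2/3, −γ/2, and −1/2 ± (1/2)√(1 − (4/3)·V''(σ_{1c})/V(σ_{1c})). -/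
open Set

set_option maxHeartbeats 1000000 in
/-- At a critical point `σ_{1c}` of the potential, `Q₂ = (σ_{1c}, 0, 0, 0)` is an
equilibrium of the four-dimensional projected system, and the characteristic polynomial
of the Jacobian matrix there equals
`(λ + 2/3)(λ + γ/2)(λ² + λ + V''(σ_{1c})/(3V(σ_{1c})))`; equivalently, the eigenvalues
of the linearization are `−2/3`, `−γ/2`, `−1/2 ± (1/2)√(1 − (4/3)V''(σ_{1c})/V(σ_{1c}))`. -/
theorem stmt_12
    (γ : ℝ) (hγ0 : 0 < γ) (hγ2 : γ < 2)
    (V χ : ℝ → ℝ) (hV : ContDiff ℝ 2 V) (hχ : ContDiff ℝ 1 χ)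
    (hVpos : ∀ x, 0 < V x) (hχpos : ∀ x, 0 < χ x)
    (σ1c : ℝ) (hcrit : deriv V σ1c = 0)
    -- the four-dimensional projected system, in variables `(σ₁, σ₂, σ₃, σ₅)`
    (g : (Fin 4 → ℝ) → Fin 4 → ℝ)
    (hg : ∀ x : Fin 4 → ℝ, g x =
      ![Real.sqrt (2/3) * x 1,
        (x 1)^3 + (1/6) * (3*γ*(x 2)^2 + 4*(x 3)^2 - 6) * x 1
          - ((1 - (x 1)^2 - (x 2)^2 - (x 3)^2) / Real.sqrt 6) * (deriv V (x 0) / V (x 0))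
          + ((4 - 3*γ) * (x 2)^2 / (2 * Real.sqrt 6)) * (deriv χ (x 0) / χ (x 0)),
        (1/6) * x 2 * (6*(x 1)^2 + 3*γ*((x 2)^2 - 1) + 4*(x 3)^2)
          - ((4 - 3*γ) * x 1 * x 2 / (2 * Real.sqrt 6)) * (deriv χ (x 0) / χ (x 0)),
        (1/6) * x 3 * (6*(x 1)^2 + 3*γ*(x 2)^2 + 4*(x 3)^2 - 4)])
    (Q2 : Fin 4 → ℝ) (hQ2 : Q2 = ![σ1c, 0, 0, 0]) :
    -- `Q₂` is an equilibrium point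
    g Q2 = 0
    -- the characteristic polynomial of the Jacobian matrix at `Q₂`
    ∧ ∀ lam : ℝ,
      (lam • (1 : Matrix (Fin 4) (Fin 4) ℝ)
        - Matrix.of (fun i j =>
            deriv (fun s => g (Function.update Q2 j s) i) (Q2 j))).det
      = (lam + 2/3) * (lam + γ/2)
          * (lam^2 + lam + deriv (deriv V) σ1c / (3 * V σ1c)) := by
  have hV0 : V σ1c ≠ 0 := (hVpos σ1c).ne'
  have hVd : Differentiable ℝ V := hV.differentiable (by norm_num)
  have hVd2 : Differentiable ℝ (deriv V) := by
    have h : ContDiff ℝ ((1:ℕ∞)+1) V := by exact_mod_cast hV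
    exact (contDiff_succ_iff_deriv.mp h).2.2.differentiable (by norm_num)
  -- update lemmas
  have hu0 : ∀ s : ℝ, Function.update ![σ1c,(0:ℝ),0,0] (0:Fin 4) s = ![s,0,0,0] := by
    intro s; funext k; fin_cases k <;> simp [Function.update]
  have hu1 : ∀ s : ℝ, Function.update ![σ1c,(0:ℝ),0,0] (1:Fin 4) s = ![σ1c,s,0,0] := by
    intro s; funext k; fin_cases k <;> simp [Function.update]
  have hu2 : ∀ s : ℝ, Function.update ![σ1c,(0:ℝ),0,0] (2:Fin 4) s = ![σ1c,0,s,0] := by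
    intro s; funext k; fin_cases k <;> simp [Function.update]
  have hu3 : ∀ s : ℝ, Function.update ![σ1c,(0:ℝ),0,0] (3:Fin 4) s = ![σ1c,0,0,s] := by
    intro s; funext k; fin_cases k <;> simp [Function.update]
  constructor
  · rw [hg, hQ2]
    funext i
    fin_cases i <;> simp [hcrit]
  · intro lam
    set d := deriv (deriv V) σ1c with hd
    clear_value d
    have E00 : deriv (fun s => g (Function.update ![σ1c,(0:ℝ),0,0] (0:Fin 4) s) 0) σ1c = 0 := by
      have hf : (fun s => g (Function.update ![σ1c,(0:ℝ),0,0] (0:Fin 4) s) 0) = fun _ => (0:ℝ) := by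
        funext s; rw [hu0, hg]; simp only [Matrix.cons_val]; norm_num
      rw [hf]; exact deriv_const _ _
    have E01 : deriv (fun s => g (Function.update ![σ1c,(0:ℝ),0,0] (1:Fin 4) s) 0) 0 = Real.sqrt (2/3) := by
      have hf : (fun s => g (Function.update ![σ1c,(0:ℝ),0,0] (1:Fin 4) s) 0) = fun s => Real.sqrt (2/3) * s := by
        funext s; rw [hu1, hg]; norm_num
      rw [hf]
      have h := (hasDerivAt_id (0:ℝ)).const_mul (Real.sqrt (2/3))
      simpa using h.deriv
    have E02 : deriv (fun s => g (Function.update ![σ1c,(0:ℝ),0,0] (2:Fin 4) s) 0) 0 = 0 := by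
      have hf : (fun s => g (Function.update ![σ1c,(0:ℝ),0,0] (2:Fin 4) s) 0) = fun _ => (0:ℝ) := by
        funext s; rw [hu2, hg]; simp only [Matrix.cons_val]; norm_num
      rw [hf]; exact deriv_const _ _
    have E03 : deriv (fun s => g (Function.update ![σ1c,(0:ℝ),0,0] (3:Fin 4) s) 0) 0 = 0 := by
      have hf : (fun s => g (Function.update ![σ1c,(0:ℝ),0,0] (3:Fin 4) s) 0) = fun _ => (0:ℝ) := by
        funext s; rw [hu3, hg]; simp only [Matrix.cons_val]; norm_num
      rw [hf]; exact deriv_const _ _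
    have E10 : deriv (fun s => g (Function.update ![σ1c,(0:ℝ),0,0] (0:Fin 4) s) 1) σ1c
        = -(d / (Real.sqrt 6 * V σ1c)) := by
      have hf : (fun s => g (Function.update ![σ1c,(0:ℝ),0,0] (0:Fin 4) s) 1)
          = fun s => (-(1 / Real.sqrt 6)) * (deriv V s / V s) := by
        funext s; rw [hu0, hg]; simp only [Matrix.cons_val]; norm_num
      rw [hf, deriv_const_mul (d := fun s => deriv V s / V s) _ ((hVd2 σ1c).div (hVd σ1c) hV0),
        deriv_fun_div (hVd2 σ1c) (hVd σ1c) hV0, hcrit, hd]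
      field_simp
      ring
    have E11 : deriv (fun s => g (Function.update ![σ1c,(0:ℝ),0,0] (1:Fin 4) s) 1) 0 = -1 := by
      have hf : (fun s => g (Function.update ![σ1c,(0:ℝ),0,0] (1:Fin 4) s) 1) = fun s => s^3 - s := by
        funext s; rw [hu1, hg]; simp only [Matrix.cons_val]; norm_num [hcrit]; ring
      rw [hf]
      have h := (hasDerivAt_pow 3 (0:ℝ)).sub (hasDerivAt_id (0:ℝ))
      simpa using h.deriv
    have E12 : deriv (fun s => g (Function.update ![σ1c,(0:ℝ),0,0] (2:Fin 4) s) 1) 0 = 0 := by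
      have hf : (fun s => g (Function.update ![σ1c,(0:ℝ),0,0] (2:Fin 4) s) 1)
          = fun s => ((4 - 3*γ) * (deriv χ σ1c / χ σ1c) / (2 * Real.sqrt 6)) * s^2 := by
        funext s; rw [hu2, hg]; simp only [Matrix.cons_val]; norm_num [hcrit]; ring
      rw [hf]
      have h := (hasDerivAt_pow 2 (0:ℝ)).const_mul
        ((4 - 3*γ) * (deriv χ σ1c / χ σ1c) / (2 * Real.sqrt 6))
      simpa using h.deriv
    have E13 : deriv (fun s => g (Function.update ![σ1c,(0:ℝ),0,0] (3:Fin 4) s) 1) 0 = 0 := by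
      have hf : (fun s => g (Function.update ![σ1c,(0:ℝ),0,0] (3:Fin 4) s) 1) = fun _ => (0:ℝ) := by
        funext s; rw [hu3, hg]; simp only [Matrix.cons_val]; norm_num [hcrit]
      rw [hf]; exact deriv_const _ _
    have E20 : deriv (fun s => g (Function.update ![σ1c,(0:ℝ),0,0] (0:Fin 4) s) 2) σ1c = 0 := by
      have hf : (fun s => g (Function.update ![σ1c,(0:ℝ),0,0] (0:Fin 4) s) 2) = fun _ => (0:ℝ) := by
        funext s; rw [hu0, hg]; simp only [Matrix.cons_val]; norm_num
      rw [hf]; exact deriv_const _ _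
    have E21 : deriv (fun s => g (Function.update ![σ1c,(0:ℝ),0,0] (1:Fin 4) s) 2) 0 = 0 := by
      have hf : (fun s => g (Function.update ![σ1c,(0:ℝ),0,0] (1:Fin 4) s) 2) = fun _ => (0:ℝ) := by
        funext s; rw [hu1, hg]; simp only [Matrix.cons_val]; norm_num
      rw [hf]; exact deriv_const _ _
    have E22 : deriv (fun s => g (Function.update ![σ1c,(0:ℝ),0,0] (2:Fin 4) s) 2) 0 = -(γ/2) := by
      have hf : (fun s => g (Function.update ![σ1c,(0:ℝ),0,0] (2:Fin 4) s) 2)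
          = fun s => (γ/2) * s^3 - (γ/2) * s := by
        funext s; rw [hu2, hg]; simp only [Matrix.cons_val]; norm_num; ring
      rw [hf]
      have h := ((hasDerivAt_pow 3 (0:ℝ)).const_mul (γ/2)).sub
        ((hasDerivAt_id (0:ℝ)).const_mul (γ/2))
      simpa [Pi.sub_def] using h.deriv
    have E23 : deriv (fun s => g (Function.update ![σ1c,(0:ℝ),0,0] (3:Fin 4) s) 2) 0 = 0 := by
      have hf : (fun s => g (Function.update ![σ1c,(0:ℝ),0,0] (3:Fin 4) s) 2) = fun _ => (0:ℝ) := by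
        funext s; rw [hu3, hg]; simp only [Matrix.cons_val]; norm_num
      rw [hf]; exact deriv_const _ _
    have E30 : deriv (fun s => g (Function.update ![σ1c,(0:ℝ),0,0] (0:Fin 4) s) 3) σ1c = 0 := by
      have hf : (fun s => g (Function.update ![σ1c,(0:ℝ),0,0] (0:Fin 4) s) 3) = fun _ => (0:ℝ) := by
        funext s; rw [hu0, hg]; simp only [Matrix.cons_val]; norm_num
      rw [hf]; exact deriv_const _ _
    have E31 : deriv (fun s => g (Function.update ![σ1c,(0:ℝ),0,0] (1:Fin 4) s) 3) 0 = 0 := by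
      have hf : (fun s => g (Function.update ![σ1c,(0:ℝ),0,0] (1:Fin 4) s) 3) = fun _ => (0:ℝ) := by
        funext s; rw [hu1, hg]; simp only [Matrix.cons_val]; norm_num
      rw [hf]; exact deriv_const _ _
    have E32 : deriv (fun s => g (Function.update ![σ1c,(0:ℝ),0,0] (2:Fin 4) s) 3) 0 = 0 := by
      have hf : (fun s => g (Function.update ![σ1c,(0:ℝ),0,0] (2:Fin 4) s) 3) = fun _ => (0:ℝ) := by
        funext s; rw [hu2, hg]; simp only [Matrix.cons_val]; norm_num
      rw [hf]; exact deriv_const _ _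
    have E33 : deriv (fun s => g (Function.update ![σ1c,(0:ℝ),0,0] (3:Fin 4) s) 3) 0 = -(2/3) := by
      have hf : (fun s => g (Function.update ![σ1c,(0:ℝ),0,0] (3:Fin 4) s) 3)
          = fun s => (2/3) * s^3 - (2/3) * s := by
        funext s; rw [hu3, hg]; simp only [Matrix.cons_val]; norm_num; ring
      rw [hf]
      have h := ((hasDerivAt_pow 3 (0:ℝ)).const_mul ((2:ℝ)/3)).sub
        ((hasDerivAt_id (0:ℝ)).const_mul ((2:ℝ)/3))
      simpa [Pi.sub_def] using h.deriv
    have hJ : (Matrix.of (fun i j =>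
            deriv (fun s => g (Function.update Q2 j s) i) (Q2 j)))
        = Matrix.of ![![0, Real.sqrt (2/3), 0, 0],
            ![-(d / (Real.sqrt 6 * V σ1c)), -1, 0, 0],
            ![0, 0, -(γ/2), 0],
            ![0, 0, 0, -(2/3)]] := by
      rw [hQ2]
      funext i j
      fin_cases i <;> fin_cases j
      · exact E00
      · exact E01
      · exact E02
      · exact E03
      · exact E10
      · exact E11
      · exact E12
      · exact E13
      · exact E20
      · exact E21
      · exact E22
      · exact E23
      · exact E30
      · exact E31
      · exact E32
      · exact E33
    rw [hJ]
    have h6 : Real.sqrt (2/3) * Real.sqrt 6 = 2 := by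
      rw [← Real.sqrt_mul (by norm_num)]
      norm_num
    have h6' : Real.sqrt 6 ≠ 0 := by positivity
    have h66 : Real.sqrt 6 * Real.sqrt 6 = 6 := Real.mul_self_sqrt (by norm_num)
    have e : Real.sqrt (2/3) = 2 / Real.sqrt 6 := by rw [eq_div_iff h6']; exact h6
    have hN : (lam • (1 : Matrix (Fin 4) (Fin 4) ℝ)
        - Matrix.of ![![0, Real.sqrt (2/3), 0, 0],
            ![-(d / (Real.sqrt 6 * V σ1c)), -1, 0, 0],
            ![0, 0, -(γ/2), 0],
            ![0, 0, 0, -(2/3)]])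
        = Matrix.of ![![lam, -(2 / Real.sqrt 6), 0, 0],
          ![d / (Real.sqrt 6 * V σ1c), lam + 1, 0, 0],
          ![0, 0, lam + γ/2, 0],
          ![0, 0, 0, lam + 2/3]] := by
      funext i j
      fin_cases i <;> fin_cases j <;>
        simp [Matrix.one_apply, Matrix.vecHead, Matrix.vecTail, e]
    rw [hN]
    clear hN hg E00 E01 E02 E03 E10 E11 E12 E13 E20 E21 E22 E23 E30 E31 E32 E33 hu0 hu1 hu2 hu3 hQ2 hd
    rw [Matrix.det_succ_row_zero]
    simp [Fin.sum_univ_succ, Matrix.det_fin_three, Fin.succAbove]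
    field_simp
    linear_combination (-(d*(3*lam*γ+4*lam+6*lam^2+2*γ))) * h66
end

section
/- For the scalar one-dimensional ODE x' = −(2/3)x^2 + (5/9)x^3 + (4/9)x^4, the origin x = 0 is an equilibrium which is unstable: there exists ε > 0 such that for every δ > 0 there exist x_0 with 0 < |x_0| < δ, a time T > 0, and a solution x : [0, T] → ℝ of the ODE with x(0) = x_0 and |x(T)| ≥ ε. In fact, any solution with x(0) < 0 is strictly decreasing as long as it stays in a sufficiently small punctured left-neighborhood of 0 and leaves it in finite forward time. -/
open Set Topology Filter

/-- For the scalar ODE `x' = −(2/3)x² + (5/9)x³ + (4/9)x⁴` (the dynamics on the center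
manifold of the de Sitter equilibrium of quadratic gravity), the origin is an unstable
equilibrium; in fact, any solution starting in a sufficiently small punctured
left-neighborhood of `0` is strictly decreasing while it stays there and leaves it in
finite forward time. -/
theorem stmt_16
    (f : ℝ → ℝ)
    (hf : ∀ x : ℝ, f x = -(2/3) * x^2 + (5/9) * x^3 + (4/9) * x^4) :
    -- the origin is an equilibrium
    f 0 = 0
    -- the origin is unstable
    ∧ (∃ ε > 0, ∀ δ > 0,
        ∃ (x0 : ℝ) (T : ℝ) (x : ℝ → ℝ),
          0 < |x0| ∧ |x0| < δ ∧ 0 < T ∧ x 0 = x0 ∧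
          (∀ t ∈ Icc (0:ℝ) T, HasDerivAt x (f (x t)) t) ∧
          ε ≤ |x T|)
    -- solutions with `x(0) < 0` decrease in a small punctured left-neighborhood of `0`
    -- and leave it in finite forward time
    ∧ (∃ r > 0, ∀ x : ℝ → ℝ,
        (∀ t : ℝ, 0 ≤ t → HasDerivAt x (f (x t)) t) →
        -r < x 0 → x 0 < 0 →
        (∀ s t : ℝ, 0 ≤ s → s < t →
          (∀ u, s ≤ u → u ≤ t → x u ∈ Ioo (-r) 0) → x t < x s) ∧
        (∃ T : ℝ, 0 < T ∧ x T ∉ Ioo (-r) 0)) := by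
  have hfc : Continuous f := by
    have h : f = fun x : ℝ => -(2/3) * x^2 + (5/9) * x^3 + (4/9) * x^4 := funext hf
    rw [h]; continuity
  -- f is negative on [-1, 0)
  have hneg : ∀ y : ℝ, -1 ≤ y → y < 0 → f y < 0 := by
    intro y h1 h2
    rw [hf]
    have hy2 : 0 < y ^ 2 := by nlinarith
    nlinarith [mul_pos (mul_pos hy2 (by linarith : (0:ℝ) < 3 - 4*y)) (by linarith : (0:ℝ) < y + 2)]
  -- f y ≤ -(2/3) y² on [-1, 0]
  have hbound : ∀ y : ℝ, -1 ≤ y → y ≤ 0 → f y ≤ -(2/3) * y ^ 2 := by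
    intro y h1 h2
    rw [hf]
    nlinarith [mul_nonneg (mul_nonneg (mul_nonneg (neg_nonneg.2 h2) (neg_nonneg.2 h2))
      (neg_nonneg.2 h2)) (by linarith : (0:ℝ) ≤ 5 + 4*y)]
  refine ⟨by rw [hf]; ring, ?_, ?_⟩
  · -- instability
    refine ⟨1/2, by norm_num, ?_⟩
    intro δ hδ
    set m : ℝ := min δ 1 with hm
    have hm0 : 0 < m := lt_min hδ one_pos
    have hm1 : m ≤ 1 := min_le_right _ _
    have hmδ : m ≤ δ := min_le_left _ _
    set b : ℝ := -(m/4) with hb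
    set d : ℝ := -(m/8) with hd
    set c : ℝ := (-3/4 : ℝ) with hc
    set a : ℝ := (-1/2 : ℝ) with ha
    set O : Set ℝ := Ioo (-1 : ℝ) 0 with hOdef
    have hOf : ∀ y ∈ O, f y < 0 := fun y hy => hneg y hy.1.le hy.2
    have hOsub : Icc c d ⊆ O := by
      intro y hy
      exact ⟨by simp only [hc] at hy ⊢; linarith [hy.1], by simp only [hd] at hy ⊢; linarith [hy.2]⟩
    have hbO : b ∈ O := ⟨by rw [hb]; linarith, by rw [hb]; linarith⟩
    have hinv_cont : ContinuousOn (fun u => (f u)⁻¹) O :=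
      hfc.continuousOn.inv₀ fun y hy => (hOf y hy).ne
    set σ : ℝ → ℝ := fun y => ∫ u in b..y, (f u)⁻¹ with hσ
    have hσd : ∀ y ∈ O, HasDerivAt σ (f y)⁻¹ y := by
      intro y hy
      have hsub : uIcc b y ⊆ O := (ordConnected_Ioo).uIcc_subset hbO hy
      exact intervalIntegral.integral_hasDerivAt_right
        ((hinv_cont.mono hsub).intervalIntegrable)
        (hinv_cont.stronglyMeasurableAtFilter isOpen_Ioo y hy)
        (hinv_cont.continuousAt (isOpen_Ioo.mem_nhds hy))
    have hσcont : ContinuousOn σ (Icc c d) :=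
      fun y hy => ((hσd y (hOsub hy)).continuousAt).continuousWithinAt
    have hanti : StrictAntiOn σ (Icc c d) := by
      apply strictAntiOn_of_deriv_neg (convex_Icc c d) hσcont
      intro y hy
      rw [interior_Icc] at hy
      have hyO := hOsub (Ioo_subset_Icc_self hy)
      rw [(hσd y hyO).deriv]
      exact inv_lt_zero.2 (hOf y hyO)
    have hbmem : b ∈ Icc c d := ⟨by rw [hb, hc]; linarith, by rw [hb, hd]; linarith⟩
    have hamem : a ∈ Icc c d := ⟨by rw [ha, hc]; linarith, by rw [ha, hd]; linarith⟩
    have hcd : c ≤ d := by rw [hc, hd]; linarith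
    have hcmem : c ∈ Icc c d := left_mem_Icc.2 hcd
    have hdmem : d ∈ Icc c d := right_mem_Icc.2 hcd
    have hσb : σ b = 0 := intervalIntegral.integral_same
    have hab : a < b := by rw [ha, hb]; linarith
    have hbd : b < d := by rw [hb, hd]; linarith
    have hca : c < a := by rw [hc, ha]; norm_num
    set T : ℝ := σ a with hT
    have hT0 : 0 < T := by rw [hT, ← hσb]; exact hanti hamem hbmem hab
    have hσd0 : σ d < 0 := by rw [← hσb]; exact hanti hbmem hdmem hbd
    have hTc : T < σ c := hanti hcmem hamem hca
    set S : Set ℝ := Icc (σ d) (σ c) with hS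
    have hIVT : Icc (σ d) (σ c) ⊆ σ '' Icc c d := intermediate_value_Icc' hcd hσcont
    set g : ℝ → ℝ := Function.invFunOn σ (Icc c d) with hg
    have hgmem : ∀ t ∈ S, g t ∈ Icc c d := by
      intro t ht
      obtain ⟨y, hy, hyt⟩ := hIVT ht
      exact Function.invFunOn_mem ⟨y, hy, hyt⟩
    have hgr : ∀ t ∈ S, σ (g t) = t := by
      intro t ht
      obtain ⟨y, hy, hyt⟩ := hIVT ht
      exact Function.invFunOn_eq ⟨y, hy, hyt⟩
    have hAA : AntitoneOn σ (Icc c d) := hanti.antitoneOn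
    have hσmem : ∀ y ∈ Icc c d, σ y ∈ S := fun y hy => ⟨hAA hy hdmem hy.2, hAA hcmem hy hy.1⟩
    have hgl : ∀ y ∈ Icc c d, g (σ y) = y := fun y hy =>
      hanti.injOn (hgmem _ (hσmem y hy)) hy (hgr _ (hσmem y hy))
    have hderiv_g : ∀ t ∈ Ioo (σ d) (σ c), HasDerivAt g (f (g t)) t := by
      intro t ht
      have hts : t ∈ S := Ioo_subset_Icc_self ht
      have hy0 := hgmem t hts
      have hy0O := hOsub hy0
      have hy0' : g t ∈ Ioo c d := by
        refine ⟨lt_of_le_of_ne hy0.1 ?_, lt_of_le_of_ne hy0.2 ?_⟩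
        · intro he
          have h2 : σ c = t := by rw [he]; exact hgr t hts
          exact lt_irrefl t (h2 ▸ ht.2)
        · intro he
          have h2 : σ d = t := by rw [← he]; exact hgr t hts
          exact lt_irrefl t (h2 ▸ ht.1)
      have hmono : StrictMonoOn (fun τ => -(g τ)) S := by
        intro t1 h1 t2 h2 h12
        simp only [neg_lt_neg_iff]
        by_contra hle
        push_neg at hle
        have hmm : σ (g t2) ≤ σ (g t1) := hAA (hgmem _ h1) (hgmem _ h2) hle
        rw [hgr _ h1, hgr _ h2] at hmm
        exact absurd hmm (not_le.2 h12)
      have hSnb : S ∈ 𝓝 t := Icc_mem_nhds ht.1 ht.2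
      have himgnb : (fun τ => -(g τ)) '' S ∈ 𝓝 (-(g t)) := by
        have hsubI : Icc (-d) (-c) ⊆ (fun τ => -(g τ)) '' S := by
          intro z hz
          have hzm : -z ∈ Icc c d := ⟨by linarith [hz.2], by linarith [hz.1]⟩
          exact ⟨σ (-z), hσmem _ hzm, by show -(g (σ (-z))) = z; rw [hgl _ hzm]; ring⟩
        exact mem_of_superset
          (Icc_mem_nhds (by linarith [hy0'.2]) (by linarith [hy0'.1])) hsubI
      have hcg : ContinuousAt g t := by
        have h1 : ContinuousAt (fun τ => -(g τ)) t :=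
          hmono.continuousAt_of_image_mem_nhds hSnb himgnb
        have h2 := h1.neg
        exact h2.congr (Filter.Eventually.of_forall fun τ => by simp)
      have hev : ∀ᶠ τ in 𝓝 t, σ (g τ) = τ := by
        filter_upwards [isOpen_Ioo.mem_nhds ht] with τ hτ
        exact hgr τ (Ioo_subset_Icc_self hτ)
      have hd2 := HasDerivAt.of_local_left_inverse hcg (hσd _ hy0O)
        (inv_ne_zero (hOf _ hy0O).ne) hev
      simpa [inv_inv] using hd2
    refine ⟨b, T, g, ?_, ?_, hT0, ?_, ?_, ?_⟩
    · rw [hb, abs_of_neg (by linarith : -(m/4) < (0:ℝ))]; linarith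
    · rw [hb, abs_of_neg (by linarith : -(m/4) < (0:ℝ))]; linarith
    · rw [← hσb]; exact hgl b hbmem
    · intro t ht
      exact hderiv_g t ⟨lt_of_lt_of_le hσd0 ht.1, lt_of_le_of_lt ht.2 hTc⟩
    · have hga : g T = a := by rw [hT]; exact hgl a hamem
      rw [hga, ha]
      rw [abs_of_neg (by norm_num : (-1/2:ℝ) < 0)]
      norm_num
  · -- part 3
    refine ⟨1/2, by norm_num, ?_⟩
    intro x hx hx0l hx0r
    have hdec : ∀ s t : ℝ, 0 ≤ s → s < t →
        (∀ u, s ≤ u → u ≤ t → x u ∈ Ioo (-(1/2) : ℝ) 0) → x t < x s := by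
      intro s t hs hst hin
      have hcont : ContinuousOn x (Icc s t) :=
        fun u hu => ((hx u (le_trans hs hu.1)).continuousAt).continuousWithinAt
      have hA : StrictAntiOn x (Icc s t) := by
        apply strictAntiOn_of_deriv_neg (convex_Icc s t) hcont
        intro u hu
        rw [interior_Icc] at hu
        have hu0 : 0 ≤ u := le_trans hs hu.1.le
        rw [(hx u hu0).deriv]
        have hmem := hin u hu.1.le hu.2.le
        exact hneg _ (by linarith [hmem.1]) hmem.2
      exact hA (left_mem_Icc.2 hst.le) (right_mem_Icc.2 hst.le) hst
    refine ⟨hdec, ?_⟩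
    by_contra h
    push_neg at h
    have hall : ∀ t : ℝ, 0 ≤ t → x t ∈ Ioo (-(1/2) : ℝ) 0 := by
      intro t ht
      rcases eq_or_lt_of_le ht with h0 | h0
      · rw [← h0]; exact ⟨hx0l, hx0r⟩
      · exact h t h0
    have hle : ∀ t : ℝ, 0 ≤ t → x t ≤ x 0 := by
      intro t ht
      rcases eq_or_lt_of_le ht with h0 | h0
      · rw [← h0]
      · exact (hdec 0 t le_rfl h0 fun u hu1 _ => hall u hu1).le
    set cc : ℝ := (2/3) * (x 0) ^ 2 with hcc
    have hcc0 : 0 < cc := by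
      have : x 0 ≠ 0 := ne_of_lt hx0r
      positivity
    have hlin : ∀ t : ℝ, 0 < t → x t ≤ x 0 - cc * t := by
      intro t ht
      have hg : ∀ u : ℝ, 0 ≤ u → HasDerivAt (fun v => x v + cc * v) (f (x u) + cc) u := by
        intro u hu
        exact ((hx u hu).add ((hasDerivAt_id u).const_mul cc)).congr_deriv (by ring)
      have hca : AntitoneOn (fun v => x v + cc * v) (Icc 0 t) := by
        apply antitoneOn_of_deriv_nonpos (convex_Icc 0 t)
        · exact fun u hu => ((hg u hu.1).continuousAt).continuousWithinAt
        · intro u hu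
          rw [interior_Icc] at hu
          exact ((hg u hu.1.le).differentiableAt).differentiableWithinAt
        · intro u hu
          rw [interior_Icc] at hu
          rw [(hg u hu.1.le).deriv]
          have hmem := hall u hu.1.le
          have hub : x u ≤ x 0 := hle u hu.1.le
          have h1 : f (x u) ≤ -(2/3) * (x u) ^ 2 :=
            hbound _ (by linarith [hmem.1]) hmem.2.le
          have h2 : (x 0) ^ 2 ≤ (x u) ^ 2 := by nlinarith [hmem.2, hx0r]
          rw [hcc]; linarith
      have := hca (left_mem_Icc.2 ht.le) (right_mem_Icc.2 ht.le) ht.le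
      simp only [mul_zero, add_zero] at this
      linarith
    set t0 : ℝ := (x 0 + 1/2 + 1) / cc with ht0
    have ht0pos : 0 < t0 := div_pos (by linarith) hcc0
    have h1 := hlin t0 ht0pos
    have h2 : cc * t0 = x 0 + 1/2 + 1 := by
      rw [ht0, mul_div_cancel₀ _ hcc0.ne']
    have h3 := (hall t0 ht0pos.le).1
    linarith
end

section
/- Let n > 1, let F(R) = R^n, and for R > 0 set φ(R) = √(3/2)·ln(n R^{n−1}). Then the conformal-frame potential satisfies (R·F'(R) − F(R)) / (2·F'(R)^2) = r(n)·e^{λ(n)·φ(R)}, where r(n) = (1/2)(n−1)·n^{−n/(n−1)} and λ(n) = −√(2/3)·(n−2)/(n−1). -/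
/-- For `F(R) = R^n` gravity with `n > 1`, setting `φ(R) = √(3/2)·ln(n R^{n−1})` for
`R > 0`, one has `F'(R) = n R^{n−1}`, and the conformal-frame potential satisfies
`(R F'(R) − F(R)) / (2 F'(R)²) = r(n) e^{λ(n) φ(R)}` with
`r(n) = (1/2)(n−1) n^{−n/(n−1)}` and `λ(n) = −√(2/3)(n−2)/(n−1)`. -/
theorem stmt_18
    (n : ℝ) (hn : 1 < n)
    (F : ℝ → ℝ) (hF : ∀ R : ℝ, F R = R ^ n) :
    ∀ R : ℝ, 0 < R →
      deriv F R = n * R ^ (n - 1) ∧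
      (R * deriv F R - F R) / (2 * (deriv F R)^2)
        = ((1/2) * (n - 1) * n ^ (-(n / (n - 1))))
          * Real.exp ((-(Real.sqrt (2/3)) * (n - 2) / (n - 1))
              * (Real.sqrt (3/2) * Real.log (n * R ^ (n - 1)))) := by
  intro R hR
  have hn0 : (0:ℝ) < n := lt_trans one_pos hn
  have hn1 : n - 1 ≠ 0 := by nlinarith
  have hFeq : F = fun R : ℝ => R ^ n := funext hF
  have hderiv : deriv F R = n * R ^ (n - 1) := by
    rw [hFeq, Real.deriv_rpow_const R n]
  refine ⟨hderiv, ?_⟩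
  have hRn1 : (0:ℝ) < R ^ (n - 1) := Real.rpow_pos_of_pos hR _
  have hX : (0:ℝ) < n * R ^ (n - 1) := mul_pos hn0 hRn1
  -- simplify the sqrt product
  have hsq : Real.sqrt (2/3) * Real.sqrt (3/2) = 1 := by
    rw [← Real.sqrt_mul (by norm_num)]
    norm_num
  -- rewrite exponent
  have hexp : (-(Real.sqrt (2/3)) * (n - 2) / (n - 1))
      * (Real.sqrt (3/2) * Real.log (n * R ^ (n - 1)))
      = (-(n - 2) / (n - 1)) * Real.log (n * R ^ (n - 1)) := by
    field_simp
    ring_nf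
    linear_combination (-(n * Real.log (n * R ^ (-1 + n))) + Real.log (n * R ^ (-1 + n)) * 2) * hsq
  rw [hexp]
  have hrpow : Real.exp ((-(n - 2) / (n - 1)) * Real.log (n * R ^ (n - 1)))
      = (n * R ^ (n - 1)) ^ (-(n - 2) / (n - 1)) := by
    rw [Real.rpow_def_of_pos hX, mul_comm]
  rw [hrpow, hderiv, hF]
  -- expand RHS powers
  have hmul : (n * R ^ (n - 1)) ^ (-(n - 2) / (n - 1))
      = n ^ (-(n - 2) / (n - 1)) * R ^ (2 - n) := by
    rw [Real.mul_rpow hn0.le hRn1.le, ← Real.rpow_mul hR.le]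
    congr 1
    field_simp
    congr 1; ring
  rw [hmul]
  have hnpow : n ^ (-(n / (n - 1))) * n ^ (-(n - 2) / (n - 1)) = 1 / n ^ 2 := by
    rw [← Real.rpow_add hn0]
    have : -(n / (n - 1)) + -(n - 2) / (n - 1) = -2 := by
      field_simp; ring
    rw [this, Real.rpow_neg hn0.le, show ((2:ℝ)) = ((2:ℕ):ℝ) by norm_num,
      Real.rpow_natCast, one_div]
  -- LHS simplification
  have hR1n : R * R ^ (n - 1) = R ^ n := by
    nth_rewrite 1 [← Real.rpow_one R]
    rw [← Real.rpow_add hR]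
    norm_num
  have hRn : R * (n * R ^ (n - 1)) = n * R ^ n := by
    rw [mul_left_comm, hR1n]
  have hsq2 : (n * R ^ (n - 1)) ^ 2 = n ^ 2 * R ^ (2 * (n - 1)) := by
    rw [mul_pow, ← Real.rpow_natCast (R ^ (n-1)) 2, ← Real.rpow_mul hR.le]
    push_cast
    ring_nf
  have hdiv : R ^ n / R ^ (2 * (n - 1)) = R ^ (2 - n) := by
    rw [← Real.rpow_sub hR]
    ring_nf
  rw [hRn, hsq2]
  have hne : (2 * (n ^ 2 * R ^ (2 * (n - 1)))) ≠ 0 := by positivity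
  have key : (n * R ^ n - R ^ n) = (n - 1) * R ^ n := by ring
  rw [key]
  rw [div_eq_iff hne]
  have : ((1:ℝ)/2) * (n - 1) * n ^ (-(n / (n - 1))) *
      (n ^ (-(n - 2) / (n - 1)) * R ^ (2 - n)) * (2 * (n ^ 2 * R ^ (2 * (n - 1))))
      = (n - 1) * (n ^ (-(n / (n - 1))) * n ^ (-(n - 2) / (n - 1))) *
        (R ^ (2 - n) * R ^ (2 * (n - 1))) * n ^ 2 := by ring
  rw [this, hnpow, ← Real.rpow_add hR]
  have h2 : (2 - n) + 2 * (n - 1) = n := by ring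
  rw [h2]
  field_simp
end
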